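/- arXiv:1507.04359 — 5 statements merged into one kernel-verified Lean document; each statement's English description precedes it below -/
import Mathlib

section
/- Let Γ be a finite simplicial graph focused at a vertex c, with trivial graph automorphism group and V \ st(c) nonempty. Label by x_1, …, x_l the vertices dominated by but not adjacent to c, by x_{l+1}, …, x_m the vertices dominated by and adjacent to c, and by P_1, …, P_k the connected components of the induced subgraph on V \ st(c), with P_i = {x_i} for 1 ≤ i ≤ l. Then an automorphism of the form τ_{c x_1}^{r_1} ⋯ τ_{c x_m}^{r_m} χ_{c,P_1}^{s_1} ⋯ χ_{c,P_{k−1}}^{s_{k−1}} (with r_i, s_j ∈ ℤ) is an inner automorphism of A_Γ if and only if all exponents r_1, …, r_m, s_1, …, s_{k−1} are zero; consequently the images in Out(A_Γ) of τ_{c x_1}, …, τ_{c x_m}, χ_{c,P_1}, …, χ_{c,P_{k−1}} form a free abelian basis of rank k + m − 1 for the image of PCT in Out(A_Γ). -/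
noncomputable section

/-- The subgroup of inner automorphisms inside `MulAut G`. -/
def Inn (G : Type) [Group G] : Subgroup (MulAut G) :=
  (MulAut.conj : G →* MulAut G).range

instance Inn.normal (G : Type) [Group G] : (Inn G).Normal := by
  constructor
  rintro x ⟨g, rfl⟩ φ
  refine ⟨φ g, ?_⟩
  ext h
  simp [MulAut.mul_apply, MulAut.conj_apply, map_mul, map_inv]

/-- The outer automorphism group of `G`. -/
abbrev Out (G : Type) [Group G] := MulAut G ⧸ Inn G

/-- The set of commutator relators defining the RAAG of a graph. -/
def raagRels {V : Type} (G : SimpleGraph V) : Set (FreeGroup V) :=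
  {r | ∃ u v : V, G.Adj u v ∧
    r = FreeGroup.of u * FreeGroup.of v * (FreeGroup.of u)⁻¹ * (FreeGroup.of v)⁻¹}

/-- The right-angled Artin group of a graph. -/
abbrev RAAG {V : Type} (G : SimpleGraph V) := PresentedGroup (raagRels G)

/-- The standard generator of `RAAG G` corresponding to a vertex. -/
def gen {V : Type} (G : SimpleGraph V) (v : V) : RAAG G := PresentedGroup.of v

/-- The star of a vertex: the vertex together with its neighbours. -/
def star {V : Type} (G : SimpleGraph V) (v : V) : Set V := insert v (G.neighborSet v)

/-- `u` dominates `v` if `lk(v) ⊆ st(u)`. -/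
def Dominates {V : Type} (G : SimpleGraph V) (u v : V) : Prop :=
  G.neighborSet v ⊆ star G u

/-- A graph has trivial automorphism group. -/
def TrivialAut {V : Type} (G : SimpleGraph V) : Prop := ∀ e : G ≃g G, ∀ v, e v = v

/-- A graph is focused at a vertex `c`. -/
def Focused {V : Type} (G : SimpleGraph V) (c : V) : Prop :=
  (∀ u v : V, u ≠ v → Dominates G u v → u = c) ∧
  ∀ v : V, v ≠ c → (G.induce (star G v)ᶜ).Connected

/-- A graph is austere. -/
def Austere {V : Type} (G : SimpleGraph V) : Prop :=
  TrivialAut G ∧ (∀ u v : V, u ≠ v → ¬Dominates G u v) ∧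
  ∀ v : V, (G.induce (star G v)ᶜ).Connected

/-- `P` is (the vertex set of) a connected component of the induced subgraph on `s`. -/
def IsCompOf {V : Type} (G : SimpleGraph V) (s : Set V) (P : Set V) : Prop :=
  ∃ x : s, P = Subtype.val '' {y : s | (G.induce s).Reachable x y}

/-- `φ` is the inversion at the vertex `v`. -/
def IsInversion {V : Type} (G : SimpleGraph V) (φ : MulAut (RAAG G)) (v : V) : Prop :=
  φ (gen G v) = (gen G v)⁻¹ ∧ ∀ w : V, w ≠ v → φ (gen G w) = gen G w

/-- `φ` is the transvection `τ_{uv}` (`v ↦ uv`). -/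
def IsTransvection {V : Type} (G : SimpleGraph V) (φ : MulAut (RAAG G)) (u v : V) : Prop :=
  u ≠ v ∧ Dominates G u v ∧ φ (gen G v) = gen G u * gen G v ∧
    ∀ w : V, w ≠ v → φ (gen G w) = gen G w

/-- `φ` is the partial conjugation `χ_{v,P}`. -/
def IsPartialConj {V : Type} (G : SimpleGraph V) (φ : MulAut (RAAG G)) (v : V) (P : Set V) :
    Prop :=
  IsCompOf G (star G v)ᶜ P ∧ (∀ u ∈ P, φ (gen G u) = gen G v * gen G u * (gen G v)⁻¹) ∧
    ∀ w : V, w ∉ P → φ (gen G w) = gen G w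

/-- The subgroup `I_Γ` of `Aut(A_Γ)` generated by the inversions. -/
def InvSubgroup {V : Type} (G : SimpleGraph V) : Subgroup (MulAut (RAAG G)) :=
  Subgroup.closure {φ | ∃ v, IsInversion G φ v}

/-- The subgroup `PCT` of `Aut(A_Γ)` generated by transvections and partial conjugations. -/
def PCT {V : Type} (G : SimpleGraph V) : Subgroup (MulAut (RAAG G)) :=
  Subgroup.closure {φ | (∃ u v, IsTransvection G φ u v) ∨ ∃ v P, IsPartialConj G φ v P}

/-- The number `l` of vertices dominated by but not adjacent to `c`. -/
def lInv {V : Type} (G : SimpleGraph V) (c : V) : ℕ :=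
  Nat.card {v : V | v ≠ c ∧ Dominates G c v ∧ ¬G.Adj c v}

/-- The number `m` of vertices (other than `c`) dominated by `c`. -/
def mInv {V : Type} (G : SimpleGraph V) (c : V) : ℕ :=
  Nat.card {v : V | v ≠ c ∧ Dominates G c v}

/-- The number `k` of connected components of `Γ \ st(c)`. -/
def kInv {V : Type} (G : SimpleGraph V) (c : V) : ℕ :=
  Nat.card ((G.induce (star G c)ᶜ).ConnectedComponent)

/-- `GL_n(ℤ)`. -/
abbrev GLZ (n : ℕ) := Matrix.GeneralLinearGroup (Fin n) ℤ

/-- `PGL_n(ℤ)`, the quotient of `GL_n(ℤ)` by its centre `{±I}`. -/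
abbrev PGLZ (n : ℕ) := GLZ n ⧸ Subgroup.center (GLZ n)

/-- The principal level 2 congruence subgroup `Λ_l[2]` of `GL_l(ℤ)`. -/
def congr2 (l : ℕ) : Subgroup (GLZ l) :=
  (Matrix.GeneralLinearGroup.map (Int.castRingHom (ZMod 2)) :
    GLZ l →* Matrix.GeneralLinearGroup (Fin l) (ZMod 2)).ker

/-- The matrix `(1 1 / 0 -1)`. -/
def Bmat : Matrix (Fin 2) (Fin 2) ℤ := !![1, 1; 0, -1]

/-- A block-diagonal `2l × 2l` matrix whose `i`th `2 × 2` diagonal block is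
`Bmat` if `ε i` and the identity otherwise. -/
def Lmat (l : ℕ) (ε : Fin l → Bool) : Matrix (Fin l × Fin 2) (Fin l × Fin 2) ℤ :=
  fun a b =>
    if a.1 = b.1 then (if ε a.1 then Bmat a.2 b.2 else (1 : Matrix (Fin 2) (Fin 2) ℤ) a.2 b.2)
    else 0

/-- `GL_{2l}(ℤ)`, with rows and columns indexed by `Fin l × Fin 2`. -/
abbrev GL2l (l : ℕ) := Matrix.GeneralLinearGroup (Fin l × Fin 2) ℤ

/-- The subgroup `𝓛 ≤ GL_{2l}(ℤ)`. -/
def scriptL (l : ℕ) : Subgroup (GL2l l) :=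
  Subgroup.closure {M : GL2l l |
    ∃ ε : Fin l → Bool, (M : Matrix (Fin l × Fin 2) (Fin l × Fin 2) ℤ) = Lmat l ε}

/-- The index type realizing the block decomposition `d = 2l + p + q`. -/
abbrev BIdx (l p q : ℕ) := (Fin l × Fin 2) ⊕ (Fin p ⊕ Fin q)

/-- The block-diagonal matrix `Diag(D₁, D₂, ε·I_q)` with `D₁ ∈ 𝓛` given by `ε1`,
`D₂` diagonal with entries `d2`, and `ε = e`. -/
def Dmat (l p q : ℕ) (ε1 : Fin l → Bool) (d2 : Fin p → ℤˣ) (e : ℤˣ) :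
    Matrix (BIdx l p q) (BIdx l p q) ℤ := fun a b =>
  match a, b with
  | Sum.inl a, Sum.inl b => Lmat l ε1 a b
  | Sum.inr (Sum.inl i), Sum.inr (Sum.inl j) => if i = j then (d2 i : ℤ) else 0
  | Sum.inr (Sum.inr i), Sum.inr (Sum.inr j) => if i = j then (e : ℤ) else 0
  | _, _ => 0

/-- The subgroup `D ≤ GL_d(ℤ)` generated by `−I_d` and the block-diagonal matrices
`Diag(D₁, D₂, ε·I_q)`. -/
def DSub (l p q : ℕ) : Subgroup (Matrix.GeneralLinearGroup (BIdx l p q) ℤ) :=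
  Subgroup.closure
    ({M | (M : Matrix (BIdx l p q) (BIdx l p q) ℤ) = -1} ∪
     {M | ∃ ε1 d2 e, (M : Matrix (BIdx l p q) (BIdx l p q) ℤ) = Dmat l p q ε1 d2 e})

/-- The word `τ_1^{r_1} ⋯ τ_m^{r_m} χ_1^{s_1} ⋯ χ_{k-1}^{s_{k-1}}` in `Aut(A_Γ)`. -/
def word5 {V : Type} (G : SimpleGraph V) {m k : ℕ} (τ : Fin m → MulAut (RAAG G))
    (χ : Fin k → MulAut (RAAG G)) (r : Fin m → ℤ) (s : Fin (k - 1) → ℤ) :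
    MulAut (RAAG G) :=
  (List.ofFn fun i => τ i ^ r i).prod *
    (List.ofFn fun j : Fin (k - 1) => χ (Fin.castLE (Nat.sub_le k 1) j) ^ s j).prod

section AuxLemmas

variable {V : Type} {G : SimpleGraph V}

lemma mulAut_ext {φ ψ : MulAut (RAAG G)} (h : ∀ v, φ (gen G v) = ψ (gen G v)) : φ = ψ :=
  MulEquiv.toMonoidHom_injective (PresentedGroup.ext h)

/-- homomorphism out of a RAAG from commuting data -/
def raagHom {H : Type*} [Group H] (f : V → H)
    (hf : ∀ u v, G.Adj u v → Commute (f u) (f v)) : RAAG G →* H :=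
  PresentedGroup.toGroup (f := f) (by
    rintro r ⟨u, v, huv, rfl⟩
    simp only [map_mul, map_inv, FreeGroup.lift_apply_of]
    rw [(hf u v huv).eq]
    group)

@[simp] lemma raagHom_gen {H : Type*} [Group H] (f : V → H)
    (hf : ∀ u v, G.Adj u v → Commute (f u) (f v)) (v : V) :
    raagHom f hf (gen G v) = f v := PresentedGroup.toGroup.of _

lemma gen_comm {u v : V} (h : G.Adj u v) : Commute (gen G u) (gen G v) := by
  have hmem : (FreeGroup.of u * FreeGroup.of v * (FreeGroup.of u)⁻¹ * (FreeGroup.of v)⁻¹ :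
      FreeGroup V) ∈ Subgroup.normalClosure (raagRels G) :=
    Subgroup.subset_normalClosure ⟨u, v, h, rfl⟩
  have h1 : (PresentedGroup.mk (raagRels G))
      (FreeGroup.of u * FreeGroup.of v * (FreeGroup.of u)⁻¹ * (FreeGroup.of v)⁻¹) = 1 := by
    exact (QuotientGroup.eq_one_iff _).mpr hmem
  simp only [map_mul, map_inv] at h1
  have : gen G u * gen G v * (gen G u)⁻¹ * (gen G v)⁻¹ = 1 := h1
  unfold Commute SemiconjBy
  have h2 : gen G u * gen G v * (gen G u)⁻¹ = gen G v := by
    have := mul_eq_one_iff_eq_inv.mp this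
    simpa using this
  calc gen G u * gen G v = (gen G u * gen G v * (gen G u)⁻¹) * gen G u := by group
  _ = gen G v * gen G u := by rw [h2]


lemma fix_zpow {H : Type*} [Group H] (φ : MulAut H) (a : H) (h : φ a = a) (n : ℤ) :
    (φ ^ n) a = a := by
  have hinv : φ⁻¹ a = a := by
    apply φ.injective; rw [show φ (φ⁻¹ a) = a from φ.apply_symm_apply a, h]
  induction n using Int.induction_on with
  | zero => simp
  | succ i ih => rw [zpow_add_one, MulAut.mul_apply, h, ih]
  | pred i ih => rw [sub_eq_add_neg, zpow_add, MulAut.mul_apply, zpow_neg_one, hinv, ih]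

lemma zpow_apply_move {H : Type*} [Group H] (φ : MulAut H) (C a : H) (p q : ℤ)
    (hC : φ C = C) (ha : φ a = C ^ p * a * C ^ q) (n : ℤ) :
    (φ ^ n) a = C ^ (n * p) * a * C ^ (n * q) := by
  have hinv : φ⁻¹ a = C ^ (-p) * a * C ^ (-q) := by
    apply φ.injective
    rw [show φ (φ⁻¹ a) = a from φ.apply_symm_apply a, map_mul, map_mul, map_zpow, map_zpow,
      hC, ha]
    group
  induction n using Int.induction_on with
  | zero => simp
  | succ i ih =>
      rw [zpow_add_one, MulAut.mul_apply, ha, map_mul, map_mul, map_zpow, map_zpow,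
        fix_zpow φ C hC, ih]
      rw [show ((i : ℤ) + 1) * p = p + (i : ℤ) * p by ring,
        show ((i : ℤ) + 1) * q = (i : ℤ) * q + q by ring, zpow_add, zpow_add]
      group
  | pred i ih =>
      rw [sub_eq_add_neg, zpow_add, MulAut.mul_apply, zpow_neg_one, hinv, map_mul, map_mul,
        map_zpow, map_zpow, fix_zpow φ C hC, ih]
      rw [show (-(i : ℤ) + -1) * p = -p + -(i : ℤ) * p by ring,
        show (-(i : ℤ) + -1) * q = -(i : ℤ) * q + -q by ring, zpow_add, zpow_add]
      group

lemma prod_ofFn_apply {H : Type*} [Group H] {n : ℕ} (F : Fin n → MulAut H) (C a : H)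
    (p q : Fin n → ℤ) (hC : ∀ i, F i C = C) (ha : ∀ i, F i a = C ^ p i * a * C ^ q i) :
    (List.ofFn F).prod a = C ^ (∑ i, p i) * a * C ^ (∑ i, q i) := by
  induction n with
  | zero => simp
  | succ n ih =>
      rw [List.ofFn_succ, List.prod_cons, MulAut.mul_apply,
        ih (fun i => F i.succ) (fun i => p i.succ) (fun i => q i.succ)
          (fun i => hC i.succ) (fun i => ha i.succ),
        map_mul, map_mul, map_zpow, map_zpow, hC 0, ha 0,
        Fin.sum_univ_succ (f := p), Fin.sum_univ_succ (f := q), zpow_add, zpow_add]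
      group

lemma prod_ofFn_fix {H : Type*} [Group H] {n : ℕ} (F : Fin n → MulAut H) (a : H)
    (h : ∀ i, F i a = a) : (List.ofFn F).prod a = a := by
  have := prod_ofFn_apply F a a 0 0 h (by intro i; simpa using h i)
  simpa using this

lemma commute_of_gen (φ ψ : MulAut (RAAG G))
    (h : ∀ v, φ (ψ (gen G v)) = ψ (φ (gen G v))) : Commute φ ψ :=
  mulAut_ext (fun v => by simpa [MulAut.mul_apply] using h v)

lemma prod_ofFn_zpow_add {M : Type*} [Group M] {n : ℕ} (f : Fin n → M)
    (hf : ∀ i j, Commute (f i) (f j)) (a b : Fin n → ℤ) :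
    (List.ofFn fun i => f i ^ (a i + b i)).prod =
      (List.ofFn fun i => f i ^ a i).prod * (List.ofFn fun i => f i ^ b i).prod := by
  induction n with
  | zero => simp
  | succ n ih =>
      have hcomm : Commute (f 0 ^ b 0) (List.ofFn fun i : Fin n => f i.succ ^ a i.succ).prod := by
        apply Commute.list_prod_right
        intro x hx
        obtain ⟨i, rfl⟩ := List.mem_ofFn.mp hx
        exact (hf 0 i.succ).zpow_zpow _ _
      rw [List.ofFn_succ (f := fun i => f i ^ (a i + b i)),
        List.ofFn_succ (f := fun i => f i ^ a i), List.ofFn_succ (f := fun i => f i ^ b i),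
        List.prod_cons, List.prod_cons, List.prod_cons,
        ih (fun i => f i.succ) (fun i j => hf i.succ j.succ) (fun i => a i.succ)
          (fun i => b i.succ), zpow_add]
      calc f 0 ^ a 0 * f 0 ^ b 0 *
            ((List.ofFn fun i : Fin n => f i.succ ^ a i.succ).prod *
             (List.ofFn fun i : Fin n => f i.succ ^ b i.succ).prod)
          = f 0 ^ a 0 * (f 0 ^ b 0 * (List.ofFn fun i : Fin n => f i.succ ^ a i.succ).prod) *
             (List.ofFn fun i : Fin n => f i.succ ^ b i.succ).prod := by group
        _ = f 0 ^ a 0 * ((List.ofFn fun i : Fin n => f i.succ ^ a i.succ).prod * f 0 ^ b 0) *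
             (List.ofFn fun i : Fin n => f i.succ ^ b i.succ).prod := by rw [hcomm.eq]
        _ = _ := by group

lemma prod_ofFn_zpow_zero {M : Type*} [Group M] {n : ℕ} (f : Fin n → M) :
    (List.ofFn fun i => f i ^ (0 : ℤ)).prod = 1 := by simp

lemma addRight_one_zpow (n : ℤ) : ∀ x : ℤ, ((Equiv.addRight (1 : ℤ)) ^ n) x = x + n := by
  induction n using Int.induction_on with
  | zero => intro x; simp
  | succ i ih =>
      intro x
      rw [zpow_add_one, Equiv.Perm.mul_apply, Equiv.coe_addRight]
      show (Equiv.addRight (1:ℤ) ^ (i:ℤ)) (x + 1) = x + (↑i + 1)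
      rw [ih (x + 1)]; ring
  | pred i ih =>
      intro x
      rw [sub_eq_add_neg, zpow_add, Equiv.Perm.mul_apply, zpow_neg_one,
        show ((Equiv.addRight (1:ℤ))⁻¹ : Equiv.Perm ℤ) = Equiv.addRight (-1 : ℤ) from
          Equiv.addRight_symm 1, Equiv.coe_addRight]
      show (Equiv.addRight (1:ℤ) ^ (-(i:ℤ))) (x + -1) = x + (-↑i + -1)
      rw [ih (x + -1)]; ring

lemma perm_eq_one_of_comm (h : Equiv.Perm ℤ)
    (hT : h * Equiv.addRight (1 : ℤ) = Equiv.addRight (1 : ℤ) * h)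
    (hsw : h * Equiv.swap (0 : ℤ) 1 = Equiv.swap (0 : ℤ) 1 * h) : h = 1 := by
  have key : ∀ n : ℤ, h (n + 1) = h n + 1 := by
    intro n
    have e := DFunLike.congr_fun hT n
    simpa [Equiv.Perm.mul_apply, Equiv.coe_addRight] using e
  have htr : ∀ n : ℤ, h n = n + h 0 := by
    intro n
    induction n using Int.induction_on with
    | zero => rw [zero_add]
    | succ i ih => rw [key, ih]; ring
    | pred i ih =>
        have := key (-(i : ℤ) - 1)
        rw [show -(i : ℤ) - 1 + 1 = -(i : ℤ) by ring, ih] at this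
        omega
  have h0 : h 0 = 0 := by
    have e := DFunLike.congr_fun hsw (0 : ℤ)
    simp only [Equiv.Perm.mul_apply] at e
    rw [Equiv.swap_apply_left] at e
    -- e : h 1 = Equiv.swap 0 1 (h 0)
    rw [show (1 : ℤ) = 0 + 1 by ring, key, htr 0] at e
    rw [Equiv.swap_apply_def] at e
    split_ifs at e <;> omega
  ext n
  rw [htr n, h0, add_zero]
  rfl

lemma swap_conj_exp_zero (s : ℤ)
    (hs : Equiv.addRight (1 : ℤ) ^ s * Equiv.swap (0 : ℤ) 1 * (Equiv.addRight (1 : ℤ) ^ s)⁻¹ =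
      Equiv.swap (0 : ℤ) 1) : s = 0 := by
  have e := DFunLike.congr_fun hs s
  rw [Equiv.Perm.mul_apply, Equiv.Perm.mul_apply, ← zpow_neg] at e
  rw [addRight_one_zpow (-s) s, add_neg_cancel, Equiv.swap_apply_left,
    addRight_one_zpow s 1] at e
  rw [Equiv.swap_apply_def] at e
  split_ifs at e <;> omega

lemma IsCompOf.subset' {s Q : Set V} (h : IsCompOf G s Q) : Q ⊆ s := by
  obtain ⟨x, rfl⟩ := h
  rintro w ⟨y, _, rfl⟩
  exact y.2

lemma IsCompOf.nonempty' {s Q : Set V} (h : IsCompOf G s Q) : Q.Nonempty := by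
  obtain ⟨x, rfl⟩ := h
  exact ⟨x, x, SimpleGraph.Reachable.refl x, rfl⟩

lemma IsCompOf.eq_of_mem {s Q Q' : Set V} (h : IsCompOf G s Q) (h' : IsCompOf G s Q')
    {w : V} (hw : w ∈ Q) (hw' : w ∈ Q') : Q = Q' := by
  obtain ⟨x, rfl⟩ := h; obtain ⟨x', rfl⟩ := h'
  obtain ⟨y, hy, rfl⟩ := hw
  obtain ⟨y', hy', hyy⟩ := hw'
  have hyy' : y' = y := Subtype.ext hyy
  subst hyy'
  ext w'
  constructor
  · rintro ⟨z, hz, rfl⟩; exact ⟨z, hy'.trans ((hy : _).symm.trans hz), rfl⟩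
  · rintro ⟨z, hz, rfl⟩; exact ⟨z, hy.trans ((hy' : _).symm.trans hz), rfl⟩

lemma exists_comp_mem {s : Set V} {w : V} (hw : w ∈ s) :
    ∃ Q, IsCompOf G s Q ∧ w ∈ Q :=
  ⟨_, ⟨⟨w, hw⟩, rfl⟩, ⟨⟨w, hw⟩, SimpleGraph.Reachable.refl _, rfl⟩⟩

lemma IsCompOf.eq_of_connected {s Q : Set V} (h : IsCompOf G s Q)
    (hc : (G.induce s).Connected) : Q = s := by
  obtain ⟨x, rfl⟩ := h
  refine Set.Subset.antisymm (by rintro w ⟨y, _, rfl⟩; exact y.2) ?_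
  intro w hw
  exact ⟨⟨w, hw⟩, hc.preconnected x ⟨w, hw⟩, rfl⟩

lemma mem_star_iff {v w : V} : w ∈ star G v ↔ w = v ∨ G.Adj v w := by
  show w ∈ insert v (G.neighborSet v) ↔ _
  simp [Set.mem_insert_iff, SimpleGraph.mem_neighborSet]

end AuxLemmas

/-- A word `τ_1^{r_1} ⋯ τ_m^{r_m} χ_1^{s_1} ⋯ χ_{k-1}^{s_{k-1}}` is inner iff all the
exponents vanish; consequently the images of the `τ_i` and `χ_j` (`1 ≤ j ≤ k-1`) form a
free abelian basis of rank `k + m - 1` for the image of `PCT` in `Out(A_Γ)`. -/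
theorem stmt5 {V : Type} [Fintype V] (G : SimpleGraph V) (c : V)
    (hF : Focused G c) (hT : TrivialAut G)
    (hne : ((star G c)ᶜ : Set V).Nonempty)
    (l m k : ℕ) (hlm : l ≤ m) (hlk : l ≤ k)
    (x : Fin m → V) (hxinj : Function.Injective x)
    (hx : ∀ v : V, (v ≠ c ∧ Dominates G c v) ↔ ∃ i, x i = v)
    (hxl : ∀ i : Fin m, (i : ℕ) < l ↔ ¬G.Adj c (x i))
    (P : Fin k → Set V) (hPinj : Function.Injective P)
    (hP : ∀ Q : Set V, IsCompOf G (star G c)ᶜ Q ↔ ∃ j, P j = Q)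
    (hPl : ∀ (j : Fin k) (hj : (j : ℕ) < l), P j = {x ⟨j, lt_of_lt_of_le hj hlm⟩})
    (τ : Fin m → MulAut (RAAG G)) (hτ : ∀ i, IsTransvection G (τ i) c (x i))
    (χ : Fin k → MulAut (RAAG G)) (hχ : ∀ j, IsPartialConj G (χ j) c (P j)) :
    (∀ (r : Fin m → ℤ) (s : Fin (k - 1) → ℤ),
        word5 G τ χ r s ∈ Inn (RAAG G) ↔ r = 0 ∧ s = 0) ∧
    Function.Injective (fun rs : (Fin m → ℤ) × (Fin (k - 1) → ℤ) =>
      QuotientGroup.mk' (Inn (RAAG G)) (word5 G τ χ rs.1 rs.2)) ∧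
    (∀ (r r' : Fin m → ℤ) (s s' : Fin (k - 1) → ℤ),
      QuotientGroup.mk' (Inn (RAAG G)) (word5 G τ χ (r + r') (s + s')) =
        QuotientGroup.mk' (Inn (RAAG G)) (word5 G τ χ r s) *
          QuotientGroup.mk' (Inn (RAAG G)) (word5 G τ χ r' s')) ∧
    Set.range (fun rs : (Fin m → ℤ) × (Fin (k - 1) → ℤ) =>
        QuotientGroup.mk' (Inn (RAAG G)) (word5 G τ χ rs.1 rs.2)) =
      ↑(Subgroup.map (QuotientGroup.mk' (Inn (RAAG G))) (PCT G)) := by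
  classical
  obtain ⟨hdom, hconnF⟩ := hF
  -- basic facts
  have hxc : ∀ i, x i ≠ c := fun i => ((hx (x i)).mpr ⟨i, rfl⟩).1
  have hcxi : ∀ i, c ≠ x i := fun i => (hτ i).1
  have hτc : ∀ i, τ i (gen G c) = gen G c := fun i => (hτ i).2.2.2 c (hcxi i)
  have hPcomp : ∀ j, IsCompOf G (star G c)ᶜ (P j) := fun j => (hP (P j)).mpr ⟨j, rfl⟩
  have hPsub : ∀ j, P j ⊆ (star G c)ᶜ := fun j => (hPcomp j).subset'
  have hcP : ∀ j, c ∉ P j := fun j h => (hPsub j h) (mem_star_iff.mpr (Or.inl rfl))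
  have hχc : ∀ j, χ j (gen G c) = gen G c := fun j => (hχ j).2.2 c (hcP j)
  have hPuniq : ∀ {w : V} {j j' : Fin k}, w ∈ P j → w ∈ P j' → j = j' :=
    fun hw hw' => hPinj ((hPcomp _).eq_of_mem (hPcomp _) hw hw')
  -- evaluation of the word on generators
  have hB : ∀ (s : Fin (k - 1) → ℤ) (v : V),
      (List.ofFn fun j : Fin (k - 1) => χ (Fin.castLE (Nat.sub_le k 1) j) ^ s j).prod (gen G v) =
        gen G c ^ (∑ j, if v ∈ P (Fin.castLE (Nat.sub_le k 1) j) then s j else 0) * gen G v *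
          gen G c ^ (-(∑ j, if v ∈ P (Fin.castLE (Nat.sub_le k 1) j) then s j else 0)) := by
    intro s v
    have hq : ∀ w : RAAG G,
        (∑ j : Fin (k-1), if v ∈ P (Fin.castLE (Nat.sub_le k 1) j) then -(s j) else 0) =
          -(∑ j : Fin (k-1), if v ∈ P (Fin.castLE (Nat.sub_le k 1) j) then s j else 0) := by
      intro _
      rw [← Finset.sum_neg_distrib]
      exact Finset.sum_congr rfl (fun j _ => by split_ifs <;> simp)
    have key := prod_ofFn_apply (fun j : Fin (k-1) => χ (Fin.castLE (Nat.sub_le k 1) j) ^ s j)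
      (gen G c) (gen G v)
      (fun j => if v ∈ P (Fin.castLE (Nat.sub_le k 1) j) then s j else 0)
      (fun j => if v ∈ P (Fin.castLE (Nat.sub_le k 1) j) then -(s j) else 0)
      (fun j => fix_zpow _ _ (hχc _) _)
      (fun j => by
        by_cases hv : v ∈ P (Fin.castLE (Nat.sub_le k 1) j)
        · have h1 : χ (Fin.castLE (Nat.sub_le k 1) j) (gen G v) =
              gen G c ^ (1 : ℤ) * gen G v * gen G c ^ (-1 : ℤ) := by
            rw [(hχ (Fin.castLE (Nat.sub_le k 1) j)).2.1 v hv]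
            group
          have h2 := zpow_apply_move (χ (Fin.castLE (Nat.sub_le k 1) j)) (gen G c) (gen G v)
            1 (-1) (hχc _) h1 (s j)
          simpa [hv] using h2
        · have h2 := fix_zpow (χ (Fin.castLE (Nat.sub_le k 1) j)) (gen G v)
            ((hχ (Fin.castLE (Nat.sub_le k 1) j)).2.2 v hv) (s j)
          simpa [hv] using h2)
    rw [key, hq (gen G v)]
  have hA : ∀ (r : Fin m → ℤ) (v : V),
      (List.ofFn fun i => τ i ^ r i).prod (gen G v) =
        gen G c ^ (∑ i, if x i = v then r i else 0) * gen G v := by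
    intro r v
    have key := prod_ofFn_apply (fun i => τ i ^ r i) (gen G c) (gen G v)
      (fun i => if x i = v then r i else 0) (fun _ => 0)
      (fun i => fix_zpow _ _ (hτc i) _)
      (fun i => by
        by_cases hv : x i = v
        · have h1 : τ i (gen G v) = gen G c ^ (1 : ℤ) * gen G v * gen G c ^ (0 : ℤ) := by
            rw [← hv, (hτ i).2.2.1]
            group
          have h2 := zpow_apply_move (τ i) (gen G c) (gen G v) 1 0 (hτc i) h1 (r i)
          simpa [hv] using h2
        · have h2 := fix_zpow (τ i) (gen G v) ((hτ i).2.2.2 v (fun h => hv h.symm)) (r i)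
          simpa [hv] using h2)
    rw [key]
    simp
  have hAc : ∀ r : Fin m → ℤ, (List.ofFn fun i => τ i ^ r i).prod (gen G c) = gen G c :=
    fun r => prod_ofFn_fix _ _ (fun i => fix_zpow _ _ (hτc i) _)
  have hE : ∀ (r : Fin m → ℤ) (s : Fin (k - 1) → ℤ) (v : V),
      word5 G τ χ r s (gen G v) =
        gen G c ^ ((∑ j, if v ∈ P (Fin.castLE (Nat.sub_le k 1) j) then s j else 0) +
            (∑ i, if x i = v then r i else 0)) * gen G v *
          gen G c ^ (-(∑ j, if v ∈ P (Fin.castLE (Nat.sub_le k 1) j) then s j else 0)) := by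
    intro r s v
    have : word5 G τ χ r s (gen G v) =
        (List.ofFn fun i => τ i ^ r i).prod
          ((List.ofFn fun j : Fin (k - 1) =>
            χ (Fin.castLE (Nat.sub_le k 1) j) ^ s j).prod (gen G v)) := rfl
    rw [this, hB s v, map_mul, map_mul, map_zpow, map_zpow, hAc, hA, zpow_add]
    group
  -- commutation
  have hcommττ : ∀ i i', Commute (τ i) (τ i') := by
    intro i i'
    rcases eq_or_ne i i' with rfl | hne
    · exact Commute.refl _
    apply commute_of_gen
    intro v
    by_cases h1 : v = x i
    · subst h1
      have e1 : τ i' (gen G (x i)) = gen G (x i) := (hτ i').2.2.2 _ (fun h => hne (hxinj h))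
      rw [e1, (hτ i).2.2.1, map_mul, hτc i', e1]
    · by_cases h2 : v = x i'
      · subst h2
        have e1 : τ i (gen G (x i')) = gen G (x i') :=
          (hτ i).2.2.2 _ (fun h => hne (hxinj h).symm)
        rw [e1, (hτ i').2.2.1, map_mul, hτc i, e1]
      · rw [(hτ i').2.2.2 v h2, (hτ i).2.2.2 v h1, (hτ i').2.2.2 v h2]
  have hcommχχ : ∀ j j', Commute (χ j) (χ j') := by
    intro j j'
    rcases eq_or_ne j j' with rfl | hne
    · exact Commute.refl _
    apply commute_of_gen
    intro v
    by_cases h1 : v ∈ P j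
    · have h2 : v ∉ P j' := fun hv => hne (hPuniq h1 hv)
      rw [(hχ j').2.2 v h2, (hχ j).2.1 v h1]
      simp only [map_mul, map_inv, hχc j', (hχ j').2.2 v h2]
    · by_cases h2 : v ∈ P j'
      · rw [(hχ j).2.2 v h1, (hχ j').2.1 v h2]
        simp only [map_mul, map_inv, hχc j, (hχ j).2.2 v h1]
      · rw [(hχ j').2.2 v h2, (hχ j).2.2 v h1, (hχ j').2.2 v h2]
  have hcommτχ : ∀ i j, Commute (τ i) (χ j) := by
    intro i j
    apply commute_of_gen
    intro v
    by_cases h1 : v = x i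
    · subst h1
      by_cases h2 : x i ∈ P j
      · rw [(hχ j).2.1 _ h2, (hτ i).2.2.1]
        simp only [map_mul, map_inv, hτc i, hχc j, (hτ i).2.2.1, (hχ j).2.1 _ h2]
        group
      · rw [(hχ j).2.2 _ h2, (hτ i).2.2.1]
        simp only [map_mul, hχc j, (hχ j).2.2 _ h2]
    · by_cases h2 : v ∈ P j
      · rw [(hχ j).2.1 v h2, (hτ i).2.2.2 v h1]
        simp only [map_mul, map_inv, hτc i, (hτ i).2.2.2 v h1, (hχ j).2.1 v h2]
      · rw [(hχ j).2.2 v h2, (hτ i).2.2.2 v h1, (hχ j).2.2 v h2]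
  -- multiplicativity
  have hMul : ∀ (r r' : Fin m → ℤ) (s s' : Fin (k - 1) → ℤ),
      word5 G τ χ (r + r') (s + s') = word5 G τ χ r s * word5 G τ χ r' s' := by
    intro r r' s s'
    have hA2 : (List.ofFn fun i => τ i ^ (r i + r' i)).prod =
        (List.ofFn fun i => τ i ^ r i).prod * (List.ofFn fun i => τ i ^ r' i).prod :=
      prod_ofFn_zpow_add τ hcommττ r r'
    have hB2 : (List.ofFn fun j : Fin (k-1) =>
          χ (Fin.castLE (Nat.sub_le k 1) j) ^ (s j + s' j)).prod =
        (List.ofFn fun j : Fin (k-1) => χ (Fin.castLE (Nat.sub_le k 1) j) ^ s j).prod *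
          (List.ofFn fun j : Fin (k-1) => χ (Fin.castLE (Nat.sub_le k 1) j) ^ s' j).prod :=
      prod_ofFn_zpow_add _ (fun j j' => hcommχχ _ _) s s'
    have hABcomm : Commute ((List.ofFn fun i => τ i ^ r' i).prod)
        ((List.ofFn fun j : Fin (k-1) => χ (Fin.castLE (Nat.sub_le k 1) j) ^ s j).prod) := by
      apply Commute.list_prod_left
      intro ξ hξ
      obtain ⟨i, rfl⟩ := List.mem_ofFn.mp hξ
      apply Commute.list_prod_right
      intro ζ hζ
      obtain ⟨j, rfl⟩ := List.mem_ofFn.mp hζ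
      exact (hcommτχ i _).zpow_zpow _ _
    show (List.ofFn fun i => τ i ^ (r + r') i).prod *
        (List.ofFn fun j : Fin (k-1) =>
          χ (Fin.castLE (Nat.sub_le k 1) j) ^ (s + s') j).prod = _
    simp only [Pi.add_apply]
    rw [hA2, hB2]
    calc (List.ofFn fun i => τ i ^ r i).prod * (List.ofFn fun i => τ i ^ r' i).prod *
          ((List.ofFn fun j : Fin (k-1) => χ (Fin.castLE (Nat.sub_le k 1) j) ^ s j).prod *
           (List.ofFn fun j : Fin (k-1) => χ (Fin.castLE (Nat.sub_le k 1) j) ^ s' j).prod)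
        = (List.ofFn fun i => τ i ^ r i).prod *
            ((List.ofFn fun i => τ i ^ r' i).prod *
             (List.ofFn fun j : Fin (k-1) => χ (Fin.castLE (Nat.sub_le k 1) j) ^ s j).prod) *
            (List.ofFn fun j : Fin (k-1) => χ (Fin.castLE (Nat.sub_le k 1) j) ^ s' j).prod := by
          group
      _ = (List.ofFn fun i => τ i ^ r i).prod *
            ((List.ofFn fun j : Fin (k-1) => χ (Fin.castLE (Nat.sub_le k 1) j) ^ s j).prod *
             (List.ofFn fun i => τ i ^ r' i).prod) *
            (List.ofFn fun j : Fin (k-1) => χ (Fin.castLE (Nat.sub_le k 1) j) ^ s' j).prod := by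
          rw [hABcomm.eq]
      _ = _ := by
          show _ = (List.ofFn fun i => τ i ^ r i).prod *
            (List.ofFn fun j : Fin (k-1) => χ (Fin.castLE (Nat.sub_le k 1) j) ^ s j).prod *
            ((List.ofFn fun i => τ i ^ r' i).prod *
             (List.ofFn fun j : Fin (k-1) => χ (Fin.castLE (Nat.sub_le k 1) j) ^ s' j).prod)
          group
  have hOne : word5 G τ χ 0 0 = 1 := by
    show (List.ofFn fun i => τ i ^ ((0 : Fin m → ℤ) i)).prod *
        (List.ofFn fun j : Fin (k-1) =>
          χ (Fin.castLE (Nat.sub_le k 1) j) ^ ((0 : Fin (k-1) → ℤ) j)).prod = 1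
    simp only [Pi.zero_apply]
    rw [prod_ofFn_zpow_zero, prod_ofFn_zpow_zero, one_mul]
  have hInvW : ∀ (r : Fin m → ℤ) (s : Fin (k - 1) → ℤ),
      (word5 G τ χ r s)⁻¹ = word5 G τ χ (-r) (-s) := by
    intro r s
    symm
    rw [eq_inv_iff_mul_eq_one, ← hMul]
    simpa using hOne
  -- the main characterisation
  have hIff : ∀ (r : Fin m → ℤ) (s : Fin (k - 1) → ℤ),
      word5 G τ χ r s ∈ Inn (RAAG G) ↔ r = 0 ∧ s = 0 := by
    intro r s
    constructor
    · intro hmem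
      obtain ⟨g, hg⟩ := hmem
      have hr : r = 0 := by
        funext i
        have e0 : gen G c ^ ((∑ j, if x i ∈ P (Fin.castLE (Nat.sub_le k 1) j) then s j else 0) +
              (∑ i', if x i' = x i then r i' else 0)) * gen G (x i) *
              gen G c ^ (-(∑ j, if x i ∈ P (Fin.castLE (Nat.sub_le k 1) j) then s j else 0)) =
            g * gen G (x i) * g⁻¹ := by
          rw [← hE r s (x i), ← hg]; rfl
        have hTsum : (∑ i', if x i' = x i then r i' else 0) = r i := by
          rw [Finset.sum_eq_single i (fun i' _ hne => if_neg (fun h => hne (hxinj h)))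
            (fun h => absurd (Finset.mem_univ i) h), if_pos rfl]
        rw [hTsum] at e0
        have e1 := congrArg (raagHom (G := G)
          (fun v => Multiplicative.ofAdd (if v = c then (1 : ℤ) else 0))
          (fun u v _ => Commute.all _ _)) e0
        simp only [map_mul, map_zpow, map_inv, raagHom_gen] at e1
        have e2 := congrArg Multiplicative.toAdd e1
        simp [hxc i] at e2
        simpa using e2
      subst hr
      refine ⟨rfl, ?_⟩
      funext j₀
      have hklt : k - 1 < k := by have := j₀.isLt; omega
      obtain ⟨bb, hbb⟩ := (hPcomp ⟨k - 1, hklt⟩).nonempty'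
      obtain ⟨aa, haa⟩ := (hPcomp (Fin.castLE (Nat.sub_le k 1) j₀)).nonempty'
      have haa' : aa ∉ star G c := hPsub _ haa
      have hbb' : bb ∉ star G c := hPsub _ hbb
      have haac : aa ≠ c := fun h => haa' (mem_star_iff.mpr (Or.inl h))
      have hbbc : bb ≠ c := fun h => hbb' (mem_star_iff.mpr (Or.inl h))
      have hadjaa : ¬G.Adj c aa := fun h => haa' (mem_star_iff.mpr (Or.inr h))
      have hadjbb : ¬G.Adj c bb := fun h => hbb' (mem_star_iff.mpr (Or.inr h))
      set F : V → Equiv.Perm ℤ := fun v =>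
        if v = c then Equiv.addRight 1 else
          if v = aa ∨ v = bb then Equiv.swap 0 1 else 1 with hFdef
      have hFc : F c = Equiv.addRight 1 := by rw [hFdef]; simp
      have hFaa : F aa = Equiv.swap 0 1 := by rw [hFdef]; simp [haac]
      have hFbb : F bb = Equiv.swap 0 1 := by rw [hFdef]; simp [hbbc]
      have hcommF : ∀ u v, G.Adj u v → Commute (F u) (F v) := by
        intro u v huv
        by_cases hu : u = c
        · have h' : G.Adj c v := hu ▸ huv
          have hva : v ≠ aa := fun h => hadjaa (h ▸ h')
          have hvb : v ≠ bb := fun h => hadjbb (h ▸ h')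
          have hvc : v ≠ c := (h'.ne).symm
          have e2 : F v = 1 := by rw [hFdef]; simp [hva, hvb, hvc]
          rw [e2]; exact Commute.one_right _
        · by_cases hv : v = c
          · have h' : G.Adj c u := hv ▸ huv.symm
            have hua : u ≠ aa := fun h => hadjaa (h ▸ h')
            have hub : u ≠ bb := fun h => hadjbb (h ▸ h')
            have e1 : F u = 1 := by rw [hFdef]; simp [hua, hub, hu]
            rw [e1]; exact Commute.one_left _
          · by_cases h1 : u = aa ∨ u = bb
            · by_cases h2 : v = aa ∨ v = bb
              · have e1 : F u = Equiv.swap 0 1 := by rw [hFdef]; simp [hu, h1]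
                have e2 : F v = Equiv.swap 0 1 := by rw [hFdef]; simp [hv, h2]
                rw [e1, e2]
              · have e2 : F v = 1 := by rw [hFdef]; simp [hv, h2]
                rw [e2]; exact Commute.one_right _
            · have e1 : F u = 1 := by rw [hFdef]; simp [hu, h1]
              rw [e1]; exact Commute.one_left _
      -- value of the word on c
      have ewc : g * gen G c * g⁻¹ = gen G c := by
        have h1 : MulAut.conj g (gen G c) = word5 G τ χ 0 s (gen G c) := by rw [hg]
        rw [hE 0 s c] at h1
        rw [Finset.sum_eq_zero (fun j' _ => if_neg (hcP _))] at h1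
        simpa using h1
      -- value of the word on bb
      have hSbb : (∑ j', if bb ∈ P (Fin.castLE (Nat.sub_le k 1) j') then s j' else 0) = 0 := by
        refine Finset.sum_eq_zero (fun j' _ => if_neg (fun hmem => ?_))
        have h1 := hPuniq hbb hmem
        have h2 := congrArg Fin.val h1
        have := j'.isLt
        simp only [Fin.castLE] at h2
        omega
      have ewbb : g * gen G bb * g⁻¹ = gen G bb := by
        have h1 : MulAut.conj g (gen G bb) = word5 G τ χ 0 s (gen G bb) := by rw [hg]
        rw [hE 0 s bb, hSbb] at h1
        simpa using h1
      -- value of the word on aa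
      have hSaa : (∑ j', if aa ∈ P (Fin.castLE (Nat.sub_le k 1) j') then s j' else 0) = s j₀ := by
        rw [Finset.sum_eq_single j₀ (fun j' _ hne => if_neg (fun hmem => hne (by
            have h1 := hPuniq hmem haa
            exact Fin.castLE_injective _ h1)))
          (fun h => absurd (Finset.mem_univ _) h), if_pos haa]
      have ewaa : g * gen G aa * g⁻¹ =
          gen G c ^ (s j₀) * gen G aa * gen G c ^ (-(s j₀)) := by
        have h1 : MulAut.conj g (gen G aa) = word5 G τ χ 0 s (gen G aa) := by rw [hg]
        rw [hE 0 s aa, hSaa] at h1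
        simpa using h1
      -- push through the permutation representation
      have E1 : (raagHom F hcommF) g * Equiv.addRight 1 * ((raagHom F hcommF) g)⁻¹ =
          Equiv.addRight 1 := by
        have e := congrArg (raagHom F hcommF) ewc
        simpa only [map_mul, map_inv, raagHom_gen, hFc] using e
      have E2 : (raagHom F hcommF) g * Equiv.swap 0 1 * ((raagHom F hcommF) g)⁻¹ =
          Equiv.swap 0 1 := by
        have e := congrArg (raagHom F hcommF) ewbb
        simpa only [map_mul, map_inv, raagHom_gen, hFbb] using e
      have heq1 : (raagHom F hcommF) g = 1 :=
        perm_eq_one_of_comm _ (mul_inv_eq_iff_eq_mul.mp E1) (mul_inv_eq_iff_eq_mul.mp E2)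
      have E3 : (raagHom F hcommF) g * Equiv.swap 0 1 * ((raagHom F hcommF) g)⁻¹ =
          Equiv.addRight 1 ^ (s j₀) * Equiv.swap 0 1 * Equiv.addRight 1 ^ (-(s j₀)) := by
        have e := congrArg (raagHom F hcommF) ewaa
        simpa only [map_mul, map_inv, map_zpow, raagHom_gen, hFaa, hFc] using e
      rw [heq1] at E3
      simp only [one_mul, inv_one, mul_one] at E3
      have E4 : Equiv.addRight (1 : ℤ) ^ (s j₀) * Equiv.swap (0 : ℤ) 1 *
          (Equiv.addRight (1 : ℤ) ^ (s j₀))⁻¹ = Equiv.swap (0 : ℤ) 1 := by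
        rw [← zpow_neg, ← E3]
      exact swap_conj_exp_zero _ E4
    · rintro ⟨rfl, rfl⟩
      rw [hOne]
      exact one_mem _
  have hmemPCT : ∀ (r : Fin m → ℤ) (s : Fin (k - 1) → ℤ), word5 G τ χ r s ∈ PCT G := by
    intro r s
    unfold word5
    apply Subgroup.mul_mem
    · apply Subgroup.list_prod_mem
      intro ξ hξ
      obtain ⟨i, rfl⟩ := List.mem_ofFn.mp hξ
      refine Subgroup.zpow_mem _ (Subgroup.subset_closure ?_) _
      exact Or.inl ⟨c, x i, hτ i⟩
    · apply Subgroup.list_prod_mem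
      intro ξ hξ
      obtain ⟨j, rfl⟩ := List.mem_ofFn.mp hξ
      refine Subgroup.zpow_mem _ (Subgroup.subset_closure ?_) _
      exact Or.inr ⟨c, P (Fin.castLE (Nat.sub_le k 1) j), hχ _⟩
  refine ⟨hIff, ?_, ?_, ?_⟩
  · -- injectivity
    intro u w h
    simp only at h
    have h1 : QuotientGroup.mk' (Inn (RAAG G))
        (word5 G τ χ u.1 u.2 * (word5 G τ χ w.1 w.2)⁻¹) = 1 := by
      rw [map_mul, map_inv, h, mul_inv_cancel]
    have h2 := (QuotientGroup.eq_one_iff _).mp h1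
    rw [hInvW, ← hMul] at h2
    obtain ⟨hu1, hu2⟩ := (hIff _ _).mp h2
    have e1 : u.1 = w.1 := by
      have := add_neg_eq_zero.mp hu1; exact this
    have e2 : u.2 = w.2 := by
      have := add_neg_eq_zero.mp hu2; exact this
    exact Prod.ext e1 e2
  · -- multiplicativity in Out
    intro r r' s s'
    rw [hMul, map_mul]
  · -- range equals image of PCT
    have hsingleτ : ∀ i : Fin m, word5 G τ χ (Pi.single i 1) 0 = τ i := by
      intro i
      apply mulAut_ext
      intro w
      rw [hE]
      have hS : (∑ j', if w ∈ P (Fin.castLE (Nat.sub_le k 1) j')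
          then (0 : Fin (k - 1) → ℤ) j' else 0) = 0 := by simp
      have hT : (∑ i', if x i' = w then (Pi.single i (1 : ℤ)) i' else 0) =
          if x i = w then 1 else 0 := by
        rw [Finset.sum_eq_single i (fun i' _ hne => by rw [Pi.single_eq_of_ne hne]; simp)
          (fun h => absurd (Finset.mem_univ _) h)]
        simp
      rw [hS, hT]
      by_cases hw : x i = w
      · rw [if_pos hw, ← hw, (hτ i).2.2.1]
        simp
      · rw [if_neg hw, (hτ i).2.2.2 w (fun h => hw h.symm)]
        simp
    have hsingleχ : ∀ j₀ : Fin (k - 1), word5 G τ χ 0 (Pi.single j₀ 1) =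
        χ (Fin.castLE (Nat.sub_le k 1) j₀) := by
      intro j₀
      apply mulAut_ext
      intro w
      rw [hE]
      have hT : (∑ i', if x i' = w then (0 : Fin m → ℤ) i' else 0) = 0 := by simp
      have hS : (∑ j', if w ∈ P (Fin.castLE (Nat.sub_le k 1) j')
            then (Pi.single j₀ (1 : ℤ)) j' else 0) =
          if w ∈ P (Fin.castLE (Nat.sub_le k 1) j₀) then 1 else 0 := by
        rw [Finset.sum_eq_single j₀ (fun j' _ hne => by rw [Pi.single_eq_of_ne hne]; simp)
          (fun h => absurd (Finset.mem_univ _) h)]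
        simp
      rw [hT, hS]
      by_cases hw : w ∈ P (Fin.castLE (Nat.sub_le k 1) j₀)
      · rw [if_pos hw, (hχ _).2.1 w hw]
        simp only [add_zero, zpow_one, zpow_neg]
      · rw [if_neg hw, (hχ _).2.2 w hw]
        simp
    apply Set.Subset.antisymm
    · rintro q ⟨u, rfl⟩
      exact Subgroup.mem_map.mpr ⟨word5 G τ χ u.1 u.2, hmemPCT u.1 u.2, rfl⟩
    · intro q hq
      have hq' : q ∈ Subgroup.map (QuotientGroup.mk' (Inn (RAAG G))) (PCT G) := hq
      set R : Subgroup (Out (RAAG G)) :=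
        { carrier := Set.range (fun rs : (Fin m → ℤ) × (Fin (k - 1) → ℤ) =>
            QuotientGroup.mk' (Inn (RAAG G)) (word5 G τ χ rs.1 rs.2))
          one_mem' := ⟨(0, 0), by
            show QuotientGroup.mk' (Inn (RAAG G)) (word5 G τ χ 0 0) = 1
            rw [hOne, map_one]⟩
          mul_mem' := by
            rintro a b ⟨u, rfl⟩ ⟨w, rfl⟩
            exact ⟨u + w, by
              show QuotientGroup.mk' (Inn (RAAG G)) (word5 G τ χ (u + w).1 (u + w).2) = _
              rw [show (u + w).1 = u.1 + w.1 from rfl, show (u + w).2 = u.2 + w.2 from rfl,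
                hMul, map_mul]⟩
          inv_mem' := by
            rintro a ⟨u, rfl⟩
            exact ⟨-u, by
              show QuotientGroup.mk' (Inn (RAAG G)) (word5 G τ χ (-u).1 (-u).2) = _
              rw [show (-u).1 = -u.1 from rfl, show (-u).2 = -u.2 from rfl, ← hInvW,
                map_inv]⟩ } with hR
      suffices hle : Subgroup.map (QuotientGroup.mk' (Inn (RAAG G))) (PCT G) ≤ R from hle hq'
      rw [show PCT G = Subgroup.closure {φ | (∃ u v, IsTransvection G φ u v) ∨
          ∃ v Q, IsPartialConj G φ v Q} from rfl, MonoidHom.map_closure]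
      refine (Subgroup.closure_le R).mpr ?_
      rintro q' ⟨φ, hφS, rfl⟩
      rcases hφS with ⟨u, v, hT'⟩ | ⟨v, P', hPC⟩
      · -- transvection
        have hu : u = c := hdom u v hT'.1 hT'.2.1
        have hT2 : IsTransvection G φ c v := hu ▸ hT'
        obtain ⟨i, hi⟩ := (hx v).1 ⟨fun h => hT2.1 h.symm, hT2.2.1⟩
        have hφeq : φ = τ i := by
          apply mulAut_ext; intro w
          by_cases hw : w = v
          · subst hw
            rw [hT2.2.2.1, ← hi, (hτ i).2.2.1]
          · rw [hT2.2.2.2 w hw, (hτ i).2.2.2 w (fun h => hw (h.trans hi))]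
        exact ⟨(Pi.single i 1, 0), by
          show QuotientGroup.mk' (Inn (RAAG G)) (word5 G τ χ (Pi.single i 1) 0) = _
          rw [hsingleτ i, hφeq]⟩
      · -- partial conjugation
        by_cases hvc : v = c
        · have hPC2 : IsPartialConj G φ c P' := hvc ▸ hPC
          obtain ⟨j, hj⟩ := (hP P').1 hPC2.1
          subst hj
          by_cases hjk : (j : ℕ) < k - 1
          · have hcast : Fin.castLE (Nat.sub_le k 1) ⟨(j : ℕ), hjk⟩ = j := by
              apply Fin.val_injective; rfl
            have hφeq : φ = χ j := by
              apply mulAut_ext; intro w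
              by_cases hw : w ∈ P j
              · rw [hPC2.2.1 w hw, (hχ j).2.1 w hw]
              · rw [hPC2.2.2 w hw, (hχ j).2.2 w hw]
            exact ⟨(0, Pi.single ⟨(j : ℕ), hjk⟩ 1), by
              show QuotientGroup.mk' (Inn (RAAG G))
                (word5 G τ χ 0 (Pi.single ⟨(j : ℕ), hjk⟩ 1)) = _
              rw [hsingleχ, hcast, hφeq]⟩
          · have hjval : (j : ℕ) = k - 1 := by have := j.isLt; omega
            have hfull : φ * word5 G τ χ 0 (fun _ => 1) = MulAut.conj (gen G c) := by
              apply mulAut_ext; intro w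
              have happ : (φ * word5 G τ χ 0 (fun _ => 1)) (gen G w) =
                  φ (word5 G τ χ 0 (fun _ => 1) (gen G w)) := rfl
              rw [happ, hE]
              have hT : (∑ i', if x i' = w then (0 : Fin m → ℤ) i' else 0) = 0 := by simp
              rw [hT, add_zero]
              by_cases hw : w ∈ star G c
              · have hS : (∑ j', if w ∈ P (Fin.castLE (Nat.sub_le k 1) j')
                    then (fun _ : Fin (k - 1) => (1 : ℤ)) j' else 0) = 0 :=
                  Finset.sum_eq_zero (fun j' _ => if_neg (fun hmem => (hPsub _ hmem) hw))
                rw [hS]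
                simp only [zpow_zero, one_mul, mul_one, neg_zero]
                rw [hPC2.2.2 w (fun hmem => (hPsub j hmem) hw), MulAut.conj_apply]
                rcases mem_star_iff.mp hw with h | h
                · subst h; group
                · have hcomm := gen_comm h
                  rw [hcomm.eq]; group
              · have hw' : w ∈ (star G c)ᶜ := hw
                obtain ⟨Q, hQ, hwQ⟩ := exists_comp_mem (G := G) hw'
                obtain ⟨jw, hjw⟩ := (hP Q).1 hQ
                subst hjw
                by_cases hjj : jw = j
                · subst hjj
                  have hS : (∑ j', if w ∈ P (Fin.castLE (Nat.sub_le k 1) j')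
                      then (fun _ : Fin (k - 1) => (1 : ℤ)) j' else 0) = 0 :=
                    Finset.sum_eq_zero (fun j' _ => if_neg (fun hmem => by
                      have h1 := hPuniq hmem hwQ
                      have h2 := congrArg Fin.val h1
                      have h3 := j'.isLt
                      simp only [Fin.castLE] at h2
                      omega))
                  rw [hS]
                  simp only [zpow_zero, one_mul, mul_one, neg_zero]
                  rw [hPC2.2.1 w hwQ, MulAut.conj_apply]
                · have hjwlt : (jw : ℕ) < k - 1 := by
                    rcases Nat.lt_or_ge (jw : ℕ) (k - 1) with h | h
                    · exact h
                    · exact absurd (Fin.val_injective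
                        (show (jw : Fin k).val = (j : Fin k).val by
                          have := jw.isLt; omega)) hjj
                  have hS : (∑ j', if w ∈ P (Fin.castLE (Nat.sub_le k 1) j')
                      then (fun _ : Fin (k - 1) => (1 : ℤ)) j' else 0) = 1 := by
                    rw [Finset.sum_eq_single (⟨(jw : ℕ), hjwlt⟩ : Fin (k - 1))
                      (fun j'' _ hne => if_neg (fun hmem => hne (by
                        have h1 := hPuniq hmem hwQ
                        have h2 := congrArg Fin.val h1
                        exact Fin.val_injective (by simpa using h2))))
                      (fun h => absurd (Finset.mem_univ _) h)]
                    rw [if_pos (show w ∈ P (Fin.castLE (Nat.sub_le k 1) ⟨(jw : ℕ), hjwlt⟩) by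
                      have hcast2 : Fin.castLE (Nat.sub_le k 1) ⟨(jw : ℕ), hjwlt⟩ = jw := by
                        apply Fin.val_injective; rfl
                      rw [hcast2]; exact hwQ)]
                  rw [hS]
                  have hwnot : w ∉ P j := fun hmem => hjj (hPuniq hwQ hmem)
                  simp only [map_mul, map_zpow, hPC2.2.2 c (hcP j), hPC2.2.2 w hwnot,
                    MulAut.conj_apply]
                  group
            have hφeq2 : φ = MulAut.conj (gen G c) * (word5 G τ χ 0 (fun _ => 1))⁻¹ := by
              rw [← hfull]; group
            refine ⟨(-(0 : Fin m → ℤ), -(fun _ : Fin (k - 1) => (1 : ℤ))), ?_⟩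
            show QuotientGroup.mk' (Inn (RAAG G))
              (word5 G τ χ (-(0 : Fin m → ℤ)) (-(fun _ : Fin (k - 1) => (1 : ℤ)))) = _
            have hconj1 : QuotientGroup.mk' (Inn (RAAG G)) (MulAut.conj (gen G c)) = 1 :=
              (QuotientGroup.eq_one_iff _).mpr ⟨gen G c, rfl⟩
            rw [← hInvW 0 (fun _ => 1), map_inv, hφeq2, map_mul, hconj1, one_mul, map_inv]
        · -- v ≠ c : partial conjugation is inner
          have hconn' := hconnF v hvc
          have hPfull : P' = (star G v)ᶜ := hPC.1.eq_of_connected hconn'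
          have hφeq : φ = MulAut.conj (gen G v) := by
            apply mulAut_ext; intro w
            by_cases hw : w ∈ P'
            · rw [hPC.2.1 w hw, MulAut.conj_apply]
            · have hw' : w ∈ star G v := by
                have h1 : w ∉ (star G v)ᶜ := hPfull ▸ hw
                simpa using h1
              rw [hPC.2.2 w hw, MulAut.conj_apply]
              rcases mem_star_iff.mp hw' with h | h
              · subst h; group
              · have hcomm := gen_comm h
                rw [hcomm.eq]; group
          refine ⟨(0, 0), ?_⟩
          show QuotientGroup.mk' (Inn (RAAG G)) (word5 G τ χ 0 0) = _
          rw [hOne, map_one, hφeq]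
          have hconj1 : QuotientGroup.mk' (Inn (RAAG G)) (MulAut.conj (gen G v)) = 1 :=
            (QuotientGroup.eq_one_iff _).mpr ⟨gen G v, rfl⟩
          exact hconj1.symm
end
end

section
/- Let l ≥ 1, p ≥ 0, q ≥ 0 be integers and set d = 2l + p + q. Let D be the subgroup of GL_d(ℤ) generated by −I_d together with all block-diagonal matrices Diag(D₁, D₂, ε·I_q), where D₁ ∈ 𝓛 ≤ GL_{2l}(ℤ), D₂ is any diagonal matrix in GL_p(ℤ) (i.e. diagonal with entries ±1), and ε ∈ {±1}. Then the centralizer of D in GL_d(ℤ) is isomorphic as a group to Λ_l[2] × (ℤ/2ℤ)^{l+p} × GL_q(ℤ). -/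
noncomputable section

namespace Stmt7

open Matrix Subgroup

variable {l p q : ℕ}

abbrev Mat (l p q : ℕ) := Matrix (BIdx l p q) (BIdx l p q) ℤ

/-- The product group appearing on the right-hand side. -/
abbrev P (l p q : ℕ) : Type :=
  congr2 l × Multiplicative (Fin (l + p) → ZMod 2) ×
    Matrix.GeneralLinearGroup (Fin q) ℤ

/-- Sign character. -/
def sgn (v : ZMod 2) : ℤ := if v = 0 then 1 else -1

lemma sgn_mul (a b : ZMod 2) : sgn (a + b) = sgn a * sgn b := by revert a b; decide
lemma sgn_cast (a : ZMod 2) : ((sgn a : ℤ) : ZMod 2) = 1 := by revert a; decide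
lemma sgn_eq_one_iff (a : ZMod 2) : sgn a = 1 ↔ a = 0 := by revert a; decide
lemma sgn_mul_self (a : ZMod 2) : sgn a * sgn a = 1 := by revert a; decide

def Am (x : P l p q) : Matrix (Fin l) (Fin l) ℤ := ((x.1 : GLZ l) : Matrix (Fin l) (Fin l) ℤ)

def sv (x : P l p q) (i : Fin (l + p)) : ℤ := sgn (Multiplicative.toAdd x.2.1 i)

def sA (x : P l p q) (i : Fin l) : ℤ := sv x (Fin.castAdd p i)

def sB (x : P l p q) (j : Fin p) : ℤ := sv x (Fin.natAdd l j)

def Cv (x : P l p q) : Matrix (Fin q) (Fin q) ℤ :=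
  ((x.2.2 : Matrix.GeneralLinearGroup (Fin q) ℤ) : Matrix (Fin q) (Fin q) ℤ)

def tm (x : P l p q) : Matrix (Fin l) (Fin l) ℤ :=
  fun i j => (Am x i j - if i = j then sA x i else 0) / 2

lemma Am_mul (x y : P l p q) : Am (x * y) = Am x * Am y := rfl

lemma Cv_mul (x y : P l p q) : Cv (x * y) = Cv x * Cv y := rfl

lemma sv_mul (x y : P l p q) (i : Fin (l + p)) : sv (x * y) i = sv x i * sv y i := by
  simp [sv, sgn_mul]

lemma Am_one : Am (1 : P l p q) = 1 := rfl
lemma Cv_one : Cv (1 : P l p q) = 1 := rfl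
lemma sv_one (i : Fin (l + p)) : sv (1 : P l p q) i = 1 := rfl

lemma Am_cast (x : P l p q) (i j : Fin l) :
    ((Am x i j : ℤ) : ZMod 2) = if i = j then 1 else 0 := by
  have hx : Matrix.GeneralLinearGroup.map (Int.castRingHom (ZMod 2)) (x.1 : GLZ l) = 1 := x.1.2
  have h2 := congrArg (fun M : Matrix.GeneralLinearGroup (Fin l) (ZMod 2) => (M : Matrix (Fin l) (Fin l) (ZMod 2)) i j) hx
  simp only [Matrix.GeneralLinearGroup.map_apply] at h2
  simpa [Matrix.one_apply, Am] using h2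

lemma two_dvd_sub (x : P l p q) (i j : Fin l) :
    (2 : ℤ) ∣ Am x i j - (if i = j then sA x i else 0) := by
  have h1 : (((Am x i j - if i = j then sA x i else 0 : ℤ)) : ZMod 2) = 0 := by
    push_cast
    rw [Am_cast]
    split <;> simp [sA, sv, sgn_cast]
  exact (ZMod.intCast_zmod_eq_zero_iff_dvd _ 2).mp h1

lemma two_tm (x : P l p q) (i j : Fin l) :
    2 * tm x i j = Am x i j - (if i = j then sA x i else 0) :=
  Int.mul_ediv_cancel' (two_dvd_sub x i j)

/-! ### The block matrix `ψ₀ x` -/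

def Ablk (x : P l p q) : Matrix (Fin l × Fin 2) (Fin l × Fin 2) ℤ :=
  fun a b =>
    if a.2 = 0 then (if b.2 = 0 then Am x a.1 b.1 else tm x a.1 b.1)
    else (if a.1 = b.1 ∧ b.2 = 1 then sA x a.1 else 0)

def psi0 (x : P l p q) : Mat l p q :=
  Matrix.fromBlocks (Ablk x) 0 0
    (Matrix.fromBlocks (Matrix.diagonal (sB x)) 0 0 (Cv x))

lemma sA_mul (x y : P l p q) (i : Fin l) : sA (x * y) i = sA x i * sA y i := sv_mul x y _
lemma sB_mul (x y : P l p q) (j : Fin p) : sB (x * y) j = sB x j * sB y j := sv_mul x y _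

lemma tm_mul (x y : P l p q) (i j : Fin l) :
    tm (x * y) i j = (∑ k, Am x i k * tm y k j) + tm x i j * sA y j := by
  have h2 : (2 : ℤ) ≠ 0 := two_ne_zero
  apply mul_left_cancel₀ h2
  rw [two_tm, mul_add, Finset.mul_sum]
  have hs : ∀ k, 2 * (Am x i k * tm y k j) =
      Am x i k * Am y k j - (if k = j then Am x i k * sA y k else 0) := by
    intro k
    rw [mul_left_comm, two_tm]
    split <;> ring
  rw [Finset.sum_congr rfl (fun k _ => hs k), Finset.sum_sub_distrib,
    Finset.sum_ite_eq' Finset.univ j (fun k => Am x i k * sA y k)]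
  have hAm : Am (x * y) i j = ∑ k, Am x i k * Am y k j := by
    rw [Am_mul]; exact Matrix.mul_apply
  have h2t : 2 * (tm x i j * sA y j) = (Am x i j - if i = j then sA x i else 0) * sA y j := by
    rw [← mul_assoc, two_tm]
  rw [hAm, h2t]
  by_cases hij : i = j
  · subst hij; simp only [sA_mul, Finset.mem_univ, if_true, if_pos rfl]; ring
  · simp only [if_neg hij, Finset.mem_univ, if_true]; ring

lemma Ablk_mul (x y : P l p q) : Ablk (x * y) = Ablk x * Ablk y := by
  ext ⟨i, a⟩ ⟨j, b⟩
  rw [Matrix.mul_apply, Fintype.sum_prod_type]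
  simp only [Fin.sum_univ_two]
  fin_cases a <;> fin_cases b
  · simp only [Ablk]
    norm_num
    rw [Am_mul]
    exact Matrix.mul_apply
  · simp only [Ablk]
    norm_num
    rw [tm_mul, Finset.sum_add_distrib,
      Finset.sum_ite_eq' Finset.univ j (fun k => tm x i k * sA y k)]
    simp
  · simp only [Ablk]
    norm_num
  · simp only [Ablk]
    norm_num
    by_cases hij : i = j
    · subst hij; simp [sA_mul]
    · simp [hij]

/-! ### `Lmat` computations -/

lemma B00 : Bmat 0 0 = 1 := rfl
lemma B01 : Bmat 0 1 = 1 := rfl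
lemma B10 : Bmat 1 0 = 0 := rfl
lemma B11 : Bmat 1 1 = -1 := rfl

lemma Lmat_mul_apply (ε : Fin l → Bool) (N : Matrix (Fin l × Fin 2) (Fin l × Fin 2) ℤ)
    (i : Fin l) (x : Fin 2) (b : Fin l × Fin 2) :
    (Lmat l ε * N) (i, x) b =
      if ε i then Bmat x 0 * N (i, 0) b + Bmat x 1 * N (i, 1) b else N (i, x) b := by
  rw [Matrix.mul_apply, Fintype.sum_prod_type]
  rw [Finset.sum_eq_single i (fun k _ hk => ?_) (by simp)]
  · rw [Fin.sum_univ_two]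
    have hL : ∀ z, Lmat l ε (i, x) (i, z) = if ε i then Bmat x z else (1 : Matrix (Fin 2) (Fin 2) ℤ) x z := by
      intro z; simp [Lmat]
    rw [hL 0, hL 1]
    by_cases hε : ε i
    · simp [hε]
    · fin_cases x <;> simp [hε, Matrix.one_apply]
  · apply Finset.sum_eq_zero
    intro z _
    have : Lmat l ε (i, x) (k, z) = 0 := by simp [Lmat, Ne.symm hk]
    rw [this, zero_mul]

lemma mul_Lmat_apply (ε : Fin l → Bool) (N : Matrix (Fin l × Fin 2) (Fin l × Fin 2) ℤ)
    (a : Fin l × Fin 2) (j : Fin l) (y : Fin 2) :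
    (N * Lmat l ε) a (j, y) =
      if ε j then N a (j, 0) * Bmat 0 y + N a (j, 1) * Bmat 1 y else N a (j, y) := by
  rw [Matrix.mul_apply, Fintype.sum_prod_type]
  rw [Finset.sum_eq_single j (fun k _ hk => ?_) (by simp)]
  · rw [Fin.sum_univ_two]
    have hL : ∀ z, Lmat l ε (j, z) (j, y) = if ε j then Bmat z y else (1 : Matrix (Fin 2) (Fin 2) ℤ) z y := by
      intro z; simp [Lmat]
    rw [hL 0, hL 1]
    by_cases hε : ε j
    · simp [hε]
    · fin_cases y <;> simp [hε, Matrix.one_apply]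
  · apply Finset.sum_eq_zero
    intro z _
    have : Lmat l ε (k, z) (j, y) = 0 := by simp [Lmat, hk]
    rw [this, mul_zero]

lemma Bmat_sq : Bmat * Bmat = 1 := by decide

lemma Lmat_sq (ε : Fin l → Bool) : Lmat l ε * Lmat l ε = 1 := by
  ext ⟨i, x⟩ ⟨j, y⟩
  rw [mul_Lmat_apply]
  by_cases hij : i = j
  · subst hij
    by_cases hε : ε i
    · have := congrArg (fun M => M x y) Bmat_sq
      simp only [Matrix.mul_apply, Fin.sum_univ_two] at this
      simp only [hε, if_true, Lmat, if_pos rfl]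
      rw [this]
      simp [Matrix.one_apply, Prod.ext_iff]
    · simp [hε, Lmat, Matrix.one_apply, Prod.ext_iff]
  · simp [Lmat, hij, Matrix.one_apply, Prod.ext_iff, Ne.symm hij]

lemma Ablk_comm (x : P l p q) (ε : Fin l → Bool) :
    Ablk x * Lmat l ε = Lmat l ε * Ablk x := by
  ext ⟨i, a⟩ ⟨j, b⟩
  rw [mul_Lmat_apply, Lmat_mul_apply]
  have ht := two_tm x i j
  by_cases hij : i = j
  · subst hij
    rw [if_pos rfl] at ht
    by_cases hε : ε i
    · simp only [hε, if_true]
      fin_cases a <;> fin_cases b <;>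
        simp [Ablk, B00, B01, B10, B11] <;> omega
    · simp [hε]
  · simp only [if_neg hij] at ht
    by_cases hi : ε i <;> by_cases hj : ε j <;>
      simp only [hi, hj, if_true, if_false] <;>
      fin_cases a <;> fin_cases b <;>
        simp [Ablk, hij, Ne.symm hij, B00, B01, B10, B11] <;> omega

/-! ### `ψ₀` is a homomorphism into the centralizer -/

lemma tm_one (i j : Fin l) : tm (1 : P l p q) i j = 0 := by
  simp only [tm, Am_one, sA, sv_one, Matrix.one_apply]
  split <;> simp

lemma Ablk_one : Ablk (1 : P l p q) = 1 := by
  ext ⟨i, a⟩ ⟨j, b⟩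
  fin_cases a <;> fin_cases b <;>
    simp [Ablk, tm_one, Am_one, sA, sv_one, Matrix.one_apply, Prod.ext_iff]

lemma psi0_one : psi0 (1 : P l p q) = 1 := by
  rw [psi0, Ablk_one, Cv_one]
  have : sB (1 : P l p q) = fun _ => 1 := funext fun j => sv_one _
  rw [this, Matrix.diagonal_one, Matrix.fromBlocks_one, Matrix.fromBlocks_one]

lemma psi0_mul (x y : P l p q) : psi0 (x * y) = psi0 x * psi0 y := by
  simp only [psi0, Matrix.fromBlocks_multiply, Matrix.mul_zero, Matrix.zero_mul,
    add_zero, zero_add, mul_zero, zero_mul]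
  have hsB : sB (x * y) = sB x * sB y := funext fun j => sB_mul x y j
  rw [Ablk_mul, Cv_mul, Matrix.diagonal_mul_diagonal, hsB]
  rfl

def psiM : P l p q →* Mat l p q where
  toFun := psi0
  map_one' := psi0_one
  map_mul' := psi0_mul

lemma Dmat_blocks (ε1 : Fin l → Bool) (d2 : Fin p → ℤˣ) (e : ℤˣ) :
    Dmat l p q ε1 d2 e =
      Matrix.fromBlocks (Lmat l ε1) 0 0
        (Matrix.fromBlocks (Matrix.diagonal fun i => (d2 i : ℤ)) 0 0
          (Matrix.diagonal fun _ => (e : ℤ))) := by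
  ext a b
  rcases a with a | a | a <;> rcases b with b | b | b <;>
    simp [Dmat, Matrix.diagonal_apply]

lemma Dmat_mul_self (ε1 : Fin l → Bool) (d2 : Fin p → ℤˣ) (e : ℤˣ) :
    Dmat l p q ε1 d2 e * Dmat l p q ε1 d2 e = 1 := by
  rw [Dmat_blocks]
  simp only [Matrix.fromBlocks_multiply, Matrix.mul_zero, Matrix.zero_mul,
    add_zero, zero_add, mul_zero, zero_mul]
  rw [Lmat_sq, Matrix.diagonal_mul_diagonal, Matrix.diagonal_mul_diagonal]
  have h1 : (fun i => (d2 i : ℤ) * (d2 i : ℤ)) = fun _ => (1 : ℤ) := by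
    funext i
    simpa using congrArg (Units.val) (Int.units_mul_self (d2 i))
  have h2 : (fun _ : Fin q => (e : ℤ) * (e : ℤ)) = fun _ => (1 : ℤ) := by
    funext i
    simpa using congrArg (Units.val) (Int.units_mul_self e)
  rw [h1, h2, Matrix.diagonal_one, Matrix.diagonal_one, Matrix.fromBlocks_one, Matrix.fromBlocks_one]

/-- The generators of `DSub` as units. -/
def DmatU (ε1 : Fin l → Bool) (d2 : Fin p → ℤˣ) (e : ℤˣ) :
    Matrix.GeneralLinearGroup (BIdx l p q) ℤ :=
  ⟨Dmat l p q ε1 d2 e, Dmat l p q ε1 d2 e, Dmat_mul_self ε1 d2 e, Dmat_mul_self ε1 d2 e⟩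

lemma DmatU_mem (ε1 : Fin l → Bool) (d2 : Fin p → ℤˣ) (e : ℤˣ) :
    DmatU ε1 d2 e ∈ DSub l p q :=
  Subgroup.subset_closure (Or.inr ⟨ε1, d2, e, rfl⟩)

lemma diag_const_comm (c : ℤ) (C : Matrix (Fin q) (Fin q) ℤ) :
    C * Matrix.diagonal (fun _ => c) = Matrix.diagonal (fun _ => c) * C := by
  ext i j
  rw [Matrix.mul_diagonal, Matrix.diagonal_mul, mul_comm]

lemma psi0_comm_Dmat (x : P l p q) (ε1 : Fin l → Bool) (d2 : Fin p → ℤˣ) (e : ℤˣ) :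
    psi0 x * Dmat l p q ε1 d2 e = Dmat l p q ε1 d2 e * psi0 x := by
  rw [Dmat_blocks, psi0]
  simp only [Matrix.fromBlocks_multiply, Matrix.mul_zero, Matrix.zero_mul,
    add_zero, zero_add, mul_zero, zero_mul]
  have hd : (fun i => sB x i * (d2 i : ℤ)) = fun i => (d2 i : ℤ) * sB x i :=
    funext fun i => mul_comm _ _
  rw [Ablk_comm, Matrix.diagonal_mul_diagonal, Matrix.diagonal_mul_diagonal,
    diag_const_comm, hd]

lemma mem_centralizer_of_commutes {G : Type*} [Group G] {S : Set G} {g : G}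
    (h : ∀ s ∈ S, s * g = g * s) :
    g ∈ Subgroup.centralizer ((Subgroup.closure S : Subgroup G) : Set G) := by
  rw [Subgroup.mem_centralizer_iff]
  intro h' hh'
  exact Subgroup.closure_induction (p := fun x _ => Commute x g) (fun s hs => h s hs)
    (Commute.one_left g) (fun a b _ _ ha hb => Commute.mul_left ha hb)
    (fun a _ ha => Commute.inv_left ha) hh'

lemma psiU_mem (x : P l p q) :
    psiM.toHomUnits x ∈
      Subgroup.centralizer (DSub l p q : Set (Matrix.GeneralLinearGroup (BIdx l p q) ℤ)) := by
  apply mem_centralizer_of_commutes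
  rintro s (hs | ⟨ε1, d2, e, hs⟩)
  · apply Units.ext
    rw [Units.val_mul, Units.val_mul, hs, MonoidHom.coe_toHomUnits]
    rw [neg_one_mul, mul_neg_one]
  · apply Units.ext
    rw [Units.val_mul, Units.val_mul, hs, MonoidHom.coe_toHomUnits]
    exact (psi0_comm_Dmat x ε1 d2 e).symm

/-- The homomorphism from the product group into the centralizer. -/
def PsiH : P l p q →*
    Subgroup.centralizer (DSub l p q : Set (Matrix.GeneralLinearGroup (BIdx l p q) ℤ)) :=
  (psiM.toHomUnits).codRestrict _ psiU_mem

/-! ### Injectivity -/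

lemma toAdd_eq_zero_of {A : Type*} [AddGroup A] {a : Multiplicative A}
    (h : Multiplicative.toAdd a = 0) : a = 1 := by
  have := congrArg Multiplicative.ofAdd h
  simpa using this

lemma PsiH_inj : Function.Injective (PsiH (l := l) (p := p) (q := q)) := by
  rw [injective_iff_map_eq_one]
  rintro ⟨x1, x2, x3⟩ hx
  have h1 : psiM.toHomUnits (x1, x2, x3) = 1 := Subtype.ext_iff.mp hx
  have h0 : psi0 (x1, x2, x3) = 1 := by
    have := congrArg Units.val h1
    simp [MonoidHom.coe_toHomUnits] at this; exact this
  have hent := fun a b => congrFun (congrFun h0 a) b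
  have hA : ∀ i j : Fin l, Am (x1, x2, x3) i j = (1 : Matrix (Fin l) (Fin l) ℤ) i j := by
    intro i j
    have := hent (Sum.inl (i, 0)) (Sum.inl (j, 0))
    simpa [psi0, Ablk, Matrix.one_apply, Prod.ext_iff] using this
  have hsA : ∀ i : Fin l, Multiplicative.toAdd x2 (Fin.castAdd p i) = 0 := by
    intro i
    have := hent (Sum.inl (i, 1)) (Sum.inl (i, 1))
    simp [psi0, Ablk, Matrix.one_apply] at this
    exact (sgn_eq_one_iff _).mp this
  have hsB : ∀ j : Fin p, Multiplicative.toAdd x2 (Fin.natAdd l j) = 0 := by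
    intro j
    have := hent (Sum.inr (Sum.inl j)) (Sum.inr (Sum.inl j))
    simp [psi0, sB, sv, Matrix.one_apply] at this
    exact (sgn_eq_one_iff _).mp this
  have hC : ∀ i j : Fin q, Cv (x1, x2, x3) i j = (1 : Matrix (Fin q) (Fin q) ℤ) i j := by
    intro i j
    have := hent (Sum.inr (Sum.inr i)) (Sum.inr (Sum.inr j))
    simpa [psi0, Matrix.one_apply] using this
  refine Prod.ext ?_ (Prod.ext ?_ ?_)
  · exact Subtype.ext (Units.ext (Matrix.ext hA))
  · exact toAdd_eq_zero_of (funext fun k => Fin.addCases hsA hsB k)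
  · exact Units.ext (Matrix.ext hC)

/-! ### Structure of centralizer elements -/

abbrev C0 (l p q : ℕ) : Subgroup (Matrix.GeneralLinearGroup (BIdx l p q) ℤ) :=
  Subgroup.centralizer (DSub l p q : Set (Matrix.GeneralLinearGroup (BIdx l p q) ℤ))

variable {U V : Matrix.GeneralLinearGroup (BIdx l p q) ℤ}

lemma cent_comm (hU : U ∈ C0 l p q) (ε1 : Fin l → Bool) (d2 : Fin p → ℤˣ) (e : ℤˣ) :
    Dmat l p q ε1 d2 e * (U : Mat l p q) = (U : Mat l p q) * Dmat l p q ε1 d2 e := by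
  have h := Subgroup.mem_centralizer_iff.mp hU (DmatU ε1 d2 e) (DmatU_mem ε1 d2 e)
  exact congrArg Units.val h

/-- The diagonal entries of the generator with `ε1 = false`. -/
def dsig (d2 : Fin p → ℤˣ) (e : ℤˣ) : BIdx l p q → ℤ :=
  Sum.elim (fun _ => 1) (Sum.elim (fun j => (d2 j : ℤ)) (fun _ => (e : ℤ)))

lemma Dmat_false_diag (d2 : Fin p → ℤˣ) (e : ℤˣ) :
    Dmat l p q (fun _ => false) d2 e = Matrix.diagonal (dsig d2 e) := by
  ext a b
  rcases a with ⟨i, x⟩ | a | a <;> rcases b with ⟨j, y⟩ | b | b <;>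
    simp [Dmat, Lmat, dsig, Matrix.diagonal_apply, Matrix.one_apply, Prod.ext_iff, ite_and]

lemma diag_rel (hU : U ∈ C0 l p q) (d2 : Fin p → ℤˣ) (e : ℤˣ) (a b : BIdx l p q) :
    dsig d2 e a * (U : Mat l p q) a b = (U : Mat l p q) a b * dsig d2 e b := by
  have h := cent_comm hU (fun _ => false) d2 e
  rw [Dmat_false_diag] at h
  have h2 := congrFun (congrFun h a) b
  rwa [Matrix.diagonal_mul, Matrix.mul_diagonal] at h2

def flipAt (j : Fin p) : Fin p → ℤˣ := fun k => if k = j then -1 else 1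

lemma zAC (hU : U ∈ C0 l p q) (a : Fin l × Fin 2) (c : Fin q) :
    (U : Mat l p q) (Sum.inl a) (Sum.inr (Sum.inr c)) = 0 := by
  have := diag_rel hU 1 (-1) (Sum.inl a) (Sum.inr (Sum.inr c))
  simp [dsig] at this
  omega

lemma zCA (hU : U ∈ C0 l p q) (c : Fin q) (a : Fin l × Fin 2) :
    (U : Mat l p q) (Sum.inr (Sum.inr c)) (Sum.inl a) = 0 := by
  have := diag_rel hU 1 (-1) (Sum.inr (Sum.inr c)) (Sum.inl a)
  simp [dsig] at this
  omega

lemma zBC (hU : U ∈ C0 l p q) (j : Fin p) (c : Fin q) :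
    (U : Mat l p q) (Sum.inr (Sum.inl j)) (Sum.inr (Sum.inr c)) = 0 := by
  have := diag_rel hU 1 (-1) (Sum.inr (Sum.inl j)) (Sum.inr (Sum.inr c))
  simp [dsig] at this
  omega

lemma zCB (hU : U ∈ C0 l p q) (c : Fin q) (j : Fin p) :
    (U : Mat l p q) (Sum.inr (Sum.inr c)) (Sum.inr (Sum.inl j)) = 0 := by
  have := diag_rel hU 1 (-1) (Sum.inr (Sum.inr c)) (Sum.inr (Sum.inl j))
  simp [dsig] at this
  omega

lemma zB_row (hU : U ∈ C0 l p q) (j : Fin p) (b : BIdx l p q) (hb : b ≠ Sum.inr (Sum.inl j)) :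
    (U : Mat l p q) (Sum.inr (Sum.inl j)) b = 0 := by
  have := diag_rel hU (flipAt j) 1 (Sum.inr (Sum.inl j)) b
  rcases b with a | b | c
  · simp [dsig, flipAt] at this; omega
  · have hbj : b ≠ j := fun h => hb (by rw [h])
    simp [dsig, flipAt, hbj] at this; omega
  · simp [dsig, flipAt] at this; omega

lemma zB_col (hU : U ∈ C0 l p q) (j : Fin p) (a : BIdx l p q) (ha : a ≠ Sum.inr (Sum.inl j)) :
    (U : Mat l p q) a (Sum.inr (Sum.inl j)) = 0 := by
  have := diag_rel hU (flipAt j) 1 a (Sum.inr (Sum.inl j))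
  rcases a with a | b | c
  · simp [dsig, flipAt] at this; omega
  · have hbj : b ≠ j := fun h => ha (by rw [h])
    simp [dsig, flipAt, hbj] at this; omega
  · simp [dsig, flipAt] at this; omega

/-! ### The `A`-block structure -/

lemma Dmat_mul_apply_ll (ε1 : Fin l → Bool) (d2 : Fin p → ℤˣ) (e : ℤˣ) (N : Mat l p q)
    (i : Fin l) (x : Fin 2) (b : BIdx l p q) :
    (Dmat l p q ε1 d2 e * N) (Sum.inl (i, x)) b =
      if ε1 i then Bmat x 0 * N (Sum.inl (i, 0)) b + Bmat x 1 * N (Sum.inl (i, 1)) b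
      else N (Sum.inl (i, x)) b := by
  rw [Matrix.mul_apply, Fintype.sum_sum_type]
  have h2 : ∑ c : Fin p ⊕ Fin q,
      Dmat l p q ε1 d2 e (Sum.inl (i, x)) (Sum.inr c) * N (Sum.inr c) b = 0 := by
    apply Finset.sum_eq_zero; intro c _; rcases c with c | c <;> simp [Dmat]
  rw [h2, add_zero, Fintype.sum_prod_type]
  rw [Finset.sum_eq_single i (fun k _ hk => ?_) (by simp)]
  · have hD : ∀ z, Dmat l p q ε1 d2 e (Sum.inl (i, x)) (Sum.inl (i, z)) =
        if ε1 i then Bmat x z else (1 : Matrix (Fin 2) (Fin 2) ℤ) x z := by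
      intro z
      show Lmat l ε1 (i, x) (i, z) = _
      simp [Lmat]
    rw [Fin.sum_univ_two, hD 0, hD 1]
    by_cases hε : ε1 i
    · simp [hε]
    · fin_cases x <;> simp [hε, Matrix.one_apply]
  · apply Finset.sum_eq_zero
    intro z _
    have h0 : Dmat l p q ε1 d2 e (Sum.inl (i, x)) (Sum.inl (k, z)) = 0 := by
      show Lmat l ε1 (i, x) (k, z) = 0
      simp [Lmat, Ne.symm hk]
    rw [h0, zero_mul]

lemma mul_Dmat_apply_ll (ε1 : Fin l → Bool) (d2 : Fin p → ℤˣ) (e : ℤˣ) (N : Mat l p q)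
    (a : BIdx l p q) (j : Fin l) (y : Fin 2) :
    (N * Dmat l p q ε1 d2 e) a (Sum.inl (j, y)) =
      if ε1 j then N a (Sum.inl (j, 0)) * Bmat 0 y + N a (Sum.inl (j, 1)) * Bmat 1 y
      else N a (Sum.inl (j, y)) := by
  rw [Matrix.mul_apply, Fintype.sum_sum_type]
  have h2 : ∑ c : Fin p ⊕ Fin q,
      N a (Sum.inr c) * Dmat l p q ε1 d2 e (Sum.inr c) (Sum.inl (j, y)) = 0 := by
    apply Finset.sum_eq_zero; intro c _; rcases c with c | c <;> simp [Dmat]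
  rw [h2, add_zero, Fintype.sum_prod_type]
  rw [Finset.sum_eq_single j (fun k _ hk => ?_) (by simp)]
  · have hD : ∀ z, Dmat l p q ε1 d2 e (Sum.inl (j, z)) (Sum.inl (j, y)) =
        if ε1 j then Bmat z y else (1 : Matrix (Fin 2) (Fin 2) ℤ) z y := by
      intro z
      show Lmat l ε1 (j, z) (j, y) = _
      simp [Lmat]
    rw [Fin.sum_univ_two, hD 0, hD 1]
    by_cases hε : ε1 j
    · simp [hε]
    · fin_cases y <;> simp [hε, Matrix.one_apply]
  · apply Finset.sum_eq_zero
    intro z _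
    have h0 : Dmat l p q ε1 d2 e (Sum.inl (k, z)) (Sum.inl (j, y)) = 0 := by
      show Lmat l ε1 (k, z) (j, y) = 0
      simp [Lmat, hk]
    rw [h0, mul_zero]

def epsAt (i : Fin l) : Fin l → Bool := fun k => decide (k = i)

lemma eps_comm (hU : U ∈ C0 l p q) (i : Fin l) (a b : BIdx l p q) :
    (Dmat l p q (epsAt i) 1 1 * (U : Mat l p q)) a b
      = ((U : Mat l p q) * Dmat l p q (epsAt i) 1 1) a b :=
  congrFun (congrFun (cent_comm hU (epsAt i) 1 1) a) b

lemma F1a (hU : U ∈ C0 l p q) (i j : Fin l) (y : Fin 2) (h : j ≠ i) :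
    (U : Mat l p q) (Sum.inl (i, 1)) (Sum.inl (j, y)) = 0 := by
  have h1 := eps_comm hU i (Sum.inl (i, 0)) (Sum.inl (j, y))
  rw [Dmat_mul_apply_ll, mul_Dmat_apply_ll] at h1
  simp [epsAt, B00, B01, B10, B11, h] at h1
  omega

lemma F1b (hU : U ∈ C0 l p q) (i : Fin l) :
    (U : Mat l p q) (Sum.inl (i, 1)) (Sum.inl (i, 0)) = 0 := by
  have h1 := eps_comm hU i (Sum.inl (i, 1)) (Sum.inl (i, 0))
  rw [Dmat_mul_apply_ll, mul_Dmat_apply_ll] at h1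
  simp [epsAt, B00, B01, B10, B11] at h1
  omega

lemma F2 (hU : U ∈ C0 l p q) (i j : Fin l) (h : i ≠ j) :
    (U : Mat l p q) (Sum.inl (i, 0)) (Sum.inl (j, 0)) =
      2 * (U : Mat l p q) (Sum.inl (i, 0)) (Sum.inl (j, 1)) := by
  have h1 := eps_comm hU j (Sum.inl (i, 0)) (Sum.inl (j, 1))
  rw [Dmat_mul_apply_ll, mul_Dmat_apply_ll] at h1
  simp [epsAt, B00, B01, B10, B11, h] at h1
  omega

lemma F3 (hU : U ∈ C0 l p q) (i : Fin l) :
    (U : Mat l p q) (Sum.inl (i, 0)) (Sum.inl (i, 0)) =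
      (U : Mat l p q) (Sum.inl (i, 1)) (Sum.inl (i, 1)) +
        2 * (U : Mat l p q) (Sum.inl (i, 0)) (Sum.inl (i, 1)) := by
  have h1 := eps_comm hU i (Sum.inl (i, 0)) (Sum.inl (i, 1))
  rw [Dmat_mul_apply_ll, mul_Dmat_apply_ll] at h1
  simp [epsAt, B00, B01, B10, B11] at h1
  omega

lemma row1_zero (hU : U ∈ C0 l p q) (i : Fin l) (b : BIdx l p q) (hb : b ≠ Sum.inl (i, 1)) :
    (U : Mat l p q) (Sum.inl (i, 1)) b = 0 := by
  rcases b with ⟨j, y⟩ | j | c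
  · by_cases hj : j = i
    · subst hj
      fin_cases y
      · exact F1b hU j
      · exact absurd rfl hb
    · exact F1a hU i j y hj
  · exact zB_col hU j _ (by simp)
  · exact zAC hU _ c

/-! ### Components of a centralizer element -/

def nA (U : Matrix.GeneralLinearGroup (BIdx l p q) ℤ) : Matrix (Fin l) (Fin l) ℤ :=
  fun i j => (U : Mat l p q) (Sum.inl (i, 0)) (Sum.inl (j, 0))

def nT (U : Matrix.GeneralLinearGroup (BIdx l p q) ℤ) : Matrix (Fin l) (Fin l) ℤ :=
  fun i j => (U : Mat l p q) (Sum.inl (i, 0)) (Sum.inl (j, 1))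

def nsA (U : Matrix.GeneralLinearGroup (BIdx l p q) ℤ) (i : Fin l) : ℤ :=
  (U : Mat l p q) (Sum.inl (i, 1)) (Sum.inl (i, 1))

def nsB (U : Matrix.GeneralLinearGroup (BIdx l p q) ℤ) (j : Fin p) : ℤ :=
  (U : Mat l p q) (Sum.inr (Sum.inl j)) (Sum.inr (Sum.inl j))

def nC (U : Matrix.GeneralLinearGroup (BIdx l p q) ℤ) : Matrix (Fin q) (Fin q) ℤ :=
  fun i j => (U : Mat l p q) (Sum.inr (Sum.inr i)) (Sum.inr (Sum.inr j))

lemma nA_one : nA (1 : Matrix.GeneralLinearGroup (BIdx l p q) ℤ) = 1 := by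
  ext i j
  simp [nA, Matrix.one_apply, Prod.ext_iff]

lemma nsA_one (i : Fin l) : nsA (1 : Matrix.GeneralLinearGroup (BIdx l p q) ℤ) i = 1 := by
  simp [nsA, Matrix.one_apply]

lemma nsB_one (j : Fin p) : nsB (1 : Matrix.GeneralLinearGroup (BIdx l p q) ℤ) j = 1 := by
  simp [nsB, Matrix.one_apply]

lemma nC_one : nC (1 : Matrix.GeneralLinearGroup (BIdx l p q) ℤ) = 1 := by
  ext i j
  simp [nC, Matrix.one_apply]

lemma nA_mul (hU : U ∈ C0 l p q) (hV : V ∈ C0 l p q) : nA (U * V) = nA U * nA V := by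
  ext i j
  show (Units.val (U * V)) (Sum.inl (i, 0)) (Sum.inl (j, 0)) = _
  rw [Units.val_mul, Matrix.mul_apply, Fintype.sum_sum_type]
  have h2 : ∑ c : Fin p ⊕ Fin q, (U : Mat l p q) (Sum.inl (i, 0)) (Sum.inr c) *
      (V : Mat l p q) (Sum.inr c) (Sum.inl (j, 0)) = 0 := by
    apply Finset.sum_eq_zero; intro c _
    rcases c with c | c
    · rw [zB_col hU c _ (by simp), zero_mul]
    · rw [zAC hU _ c, zero_mul]
  rw [h2, add_zero, Fintype.sum_prod_type]
  rw [Matrix.mul_apply]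
  apply Finset.sum_congr rfl
  intro k _
  rw [Fin.sum_univ_two]
  rw [row1_zero hV k _ (by simp), mul_zero, add_zero]
  rfl

lemma nC_mul (hU : U ∈ C0 l p q) (hV : V ∈ C0 l p q) : nC (U * V) = nC U * nC V := by
  ext i j
  show (Units.val (U * V)) (Sum.inr (Sum.inr i)) (Sum.inr (Sum.inr j)) = _
  rw [Units.val_mul, Matrix.mul_apply, Fintype.sum_sum_type]
  have h1 : ∑ c : Fin l × Fin 2, (U : Mat l p q) (Sum.inr (Sum.inr i)) (Sum.inl c) *
      (V : Mat l p q) (Sum.inl c) (Sum.inr (Sum.inr j)) = 0 := by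
    apply Finset.sum_eq_zero; intro c _
    rw [zCA hU i c, zero_mul]
  rw [h1, zero_add, Fintype.sum_sum_type]
  have h2 : ∑ c : Fin p, (U : Mat l p q) (Sum.inr (Sum.inr i)) (Sum.inr (Sum.inl c)) *
      (V : Mat l p q) (Sum.inr (Sum.inl c)) (Sum.inr (Sum.inr j)) = 0 := by
    apply Finset.sum_eq_zero; intro c _
    rw [zCB hU i c, zero_mul]
  rw [h2, zero_add, Matrix.mul_apply]
  rfl

lemma nsA_mul (hU : U ∈ C0 l p q) (hV : V ∈ C0 l p q) (i : Fin l) :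
    nsA (U * V) i = nsA U i * nsA V i := by
  show (Units.val (U * V)) (Sum.inl (i, 1)) (Sum.inl (i, 1)) = _
  rw [Units.val_mul, Matrix.mul_apply]
  rw [Finset.sum_eq_single (Sum.inl (i, 1) : BIdx l p q) (fun b _ hb => ?_) (by simp)]
  · rfl
  · rw [row1_zero hU i b hb, zero_mul]

lemma nsB_mul (hU : U ∈ C0 l p q) (hV : V ∈ C0 l p q) (j : Fin p) :
    nsB (U * V) j = nsB U j * nsB V j := by
  show (Units.val (U * V)) (Sum.inr (Sum.inl j)) (Sum.inr (Sum.inl j)) = _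
  rw [Units.val_mul, Matrix.mul_apply]
  rw [Finset.sum_eq_single (Sum.inr (Sum.inl j) : BIdx l p q) (fun b _ hb => ?_) (by simp)]
  · rfl
  · rw [zB_row hU j b hb, zero_mul]

lemma nA_unit (hU : U ∈ C0 l p q) : nA U * nA U⁻¹ = 1 := by
  rw [← nA_mul hU ((C0 l p q).inv_mem hU), mul_inv_cancel, nA_one]

lemma nA_unit' (hU : U ∈ C0 l p q) : nA U⁻¹ * nA U = 1 := by
  rw [← nA_mul ((C0 l p q).inv_mem hU) hU, inv_mul_cancel, nA_one]

lemma nC_unit (hU : U ∈ C0 l p q) : nC U * nC U⁻¹ = 1 := by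
  rw [← nC_mul hU ((C0 l p q).inv_mem hU), mul_inv_cancel, nC_one]

lemma nC_unit' (hU : U ∈ C0 l p q) : nC U⁻¹ * nC U = 1 := by
  rw [← nC_mul ((C0 l p q).inv_mem hU) hU, inv_mul_cancel, nC_one]

lemma nsA_pm (hU : U ∈ C0 l p q) (i : Fin l) : nsA U i = 1 ∨ nsA U i = -1 := by
  apply Int.isUnit_iff.mp
  apply IsUnit.of_mul_eq_one (nsA U⁻¹ i)
  rw [← nsA_mul hU ((C0 l p q).inv_mem hU), mul_inv_cancel, nsA_one]

lemma nsB_pm (hU : U ∈ C0 l p q) (j : Fin p) : nsB U j = 1 ∨ nsB U j = -1 := by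
  apply Int.isUnit_iff.mp
  apply IsUnit.of_mul_eq_one (nsB U⁻¹ j)
  rw [← nsB_mul hU ((C0 l p q).inv_mem hU), mul_inv_cancel, nsB_one]

/-! ### Surjectivity -/

lemma cast_pm_int {s : ℤ} (hs : s = 1 ∨ s = -1) : ((s : ℤ) : ZMod 2) = 1 := by
  rcases hs with h | h <;> rw [h] <;> decide

lemma PsiH_surj : Function.Surjective (PsiH (l := l) (p := p) (q := q)) := by
  rintro ⟨U, hU⟩
  have hUi := (C0 l p q).inv_mem hU
  have hAmem : (⟨nA U, nA U⁻¹, nA_unit hU, nA_unit' hU⟩ : GLZ l) ∈ congr2 l := by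
    show Matrix.GeneralLinearGroup.map (Int.castRingHom (ZMod 2)) _ = 1
    apply Matrix.GeneralLinearGroup.ext
    intro i j
    rw [Matrix.GeneralLinearGroup.map_apply]
    show ((nA U i j : ℤ) : ZMod 2) = ((1 : Matrix.GeneralLinearGroup (Fin l) (ZMod 2)) : Matrix (Fin l) (Fin l) (ZMod 2)) i j
    rw [Units.val_one, Matrix.one_apply]
    by_cases hij : i = j
    · subst hij
      rw [if_pos rfl]
      have h3 : nA U i i = nsA U i + 2 * nT U i i := F3 hU i
      show ((nA U i i : ℤ) : ZMod 2) = 1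
      rw [h3]
      push_cast
      rw [cast_pm_int (nsA_pm hU i), show (2 : ZMod 2) = 0 from rfl]
      ring
    · rw [if_neg hij]
      have h2 : nA U i j = 2 * nT U i j := F2 hU i j hij
      show ((nA U i j : ℤ) : ZMod 2) = 0
      rw [h2]
      push_cast
      rw [show (2 : ZMod 2) = 0 from rfl]
      ring
  refine ⟨(⟨⟨nA U, nA U⁻¹, nA_unit hU, nA_unit' hU⟩, hAmem⟩,
    Multiplicative.ofAdd (Fin.addCases (fun i => if nsA U i = 1 then 0 else 1)
      (fun j => if nsB U j = 1 then 0 else 1)),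
    ⟨nC U, nC U⁻¹, nC_unit hU, nC_unit' hU⟩), ?_⟩
  set x : P l p q := (⟨⟨nA U, nA U⁻¹, nA_unit hU, nA_unit' hU⟩, hAmem⟩,
    Multiplicative.ofAdd (Fin.addCases (fun i => if nsA U i = 1 then 0 else 1)
      (fun j => if nsB U j = 1 then 0 else 1)),
    ⟨nC U, nC U⁻¹, nC_unit hU, nC_unit' hU⟩) with hx
  have hAm : Am x = nA U := rfl
  have hta : Multiplicative.toAdd x.2.1 =
      Fin.addCases (fun i => if nsA U i = 1 then (0 : ZMod 2) else 1)
        (fun j => if nsB U j = 1 then 0 else 1) := rfl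
  have hsAx : ∀ i : Fin l, sA x i = nsA U i := by
    intro i
    show sgn (Multiplicative.toAdd x.2.1 (Fin.castAdd p i)) = _
    rw [hta]; simp only [Fin.addCases_left]
    rcases nsA_pm hU i with h | h <;> rw [h] <;> simp [sgn]
  have hsBx : ∀ j : Fin p, sB x j = nsB U j := by
    intro j
    show sgn (Multiplicative.toAdd x.2.1 (Fin.natAdd l j)) = _
    rw [hta]; simp only [Fin.addCases_right]
    rcases nsB_pm hU j with h | h <;> rw [h] <;> simp [sgn]
  have htm : ∀ i j : Fin l, tm x i j = nT U i j := by
    intro i j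
    have ht := two_tm x i j
    rw [hAm, hsAx i] at ht
    by_cases hij : i = j
    · subst hij
      rw [if_pos rfl] at ht
      have h3 : nA U i i = nsA U i + 2 * nT U i i := F3 hU i
      show tm x i i = nT U i i
      omega
    · rw [if_neg hij] at ht
      have h2 : nA U i j = 2 * nT U i j := F2 hU i j hij
      show tm x i j = nT U i j
      omega
  apply Subtype.ext
  apply Units.ext
  show psi0 x = (U : Mat l p q)
  ext a b
  rcases a with ⟨i, xx⟩ | aj | ac <;> rcases b with ⟨j, yy⟩ | bj | bc
  · show Ablk x (i, xx) (j, yy) = _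
    fin_cases xx <;> fin_cases yy
    · exact congrFun (congrFun hAm i) j
    · exact htm i j
    · show (if i = j ∧ (0 : Fin 2) = 1 then sA x i else 0) = _
      rw [if_neg (by simp)]
      exact (row1_zero hU i _ (by simp)).symm
    · show (if i = j ∧ (1 : Fin 2) = (1 : Fin 2) then sA x i else 0) = _
      by_cases hij : i = j
      · subst hij
        rw [if_pos ⟨rfl, rfl⟩]
        exact hsAx i
      · rw [if_neg (by simp [hij])]
        exact (F1a hU i j 1 (Ne.symm hij)).symm
  · show (0 : ℤ) = _
    exact (zB_col hU bj _ (by simp)).symm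
  · show (0 : ℤ) = _
    exact (zAC hU _ bc).symm
  · show (0 : ℤ) = _
    exact (zB_row hU aj _ (by simp)).symm
  · show Matrix.diagonal (sB x) aj bj = _
    rw [Matrix.diagonal_apply]
    by_cases hj : aj = bj
    · subst hj
      rw [if_pos rfl]
      exact hsBx aj
    · rw [if_neg hj]
      exact (zB_row hU aj _ (by simp [hj, eq_comm])).symm
  · show (0 : ℤ) = _
    exact (zBC hU aj bc).symm
  · show (0 : ℤ) = _
    exact (zCA hU ac _).symm
  · show (0 : ℤ) = _
    exact (zCB hU ac bj).symm
  · show Cv x ac bc = _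
    rfl

end Stmt7


/-- The centralizer of `D` in `GL_d(ℤ)` is isomorphic to
`Λ_l[2] × (ℤ/2)^{l+p} × GL_q(ℤ)`. -/
theorem stmt7 (l p q : ℕ) (hl : 1 ≤ l) :
    Nonempty
      (Subgroup.centralizer (DSub l p q : Set (Matrix.GeneralLinearGroup (BIdx l p q) ℤ)) ≃*
        congr2 l × Multiplicative (Fin (l + p) → ZMod 2) ×
          Matrix.GeneralLinearGroup (Fin q) ℤ) := by
  exact ⟨(MulEquiv.ofBijective Stmt7.PsiH ⟨Stmt7.PsiH_inj, Stmt7.PsiH_surj⟩).symm⟩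
end
end

section
/- For every integer l ≥ 1, the centralizer of the subgroup 𝓛 in GL_{2l}(ℤ) is isomorphic as a group to Λ_l[2] × (ℤ/2ℤ)^l. -/
noncomputable section

namespace S8

abbrev Mat (l : ℕ) := Matrix (Fin l × Fin 2) (Fin l × Fin 2) ℤ

variable {l : ℕ}

/-- Characterization of the centralizer of 𝓛 at the matrix level. -/
def Cond (l : ℕ) (M : Mat l) : Prop :=
  ∀ i j : Fin l, M (i,1) (j,0) = 0 ∧ (i ≠ j → M (i,1) (j,1) = 0) ∧
    M (i,0) (j,0) = 2 * M (i,0) (j,1) + M (i,1) (j,1)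

lemma L_mul_entry (ε : Fin l → Bool) (M : Mat l) (i j : Fin l) (c d : Fin 2) :
    (Lmat l ε * M) (i,c) (j,d) =
      (if ε i then Bmat else 1) c 0 * M (i,0) (j,d)
      + (if ε i then Bmat else 1) c 1 * M (i,1) (j,d) := by
  rw [Matrix.mul_apply, Fintype.sum_prod_type]
  simp only [Lmat, Fin.sum_univ_two]
  rw [Finset.sum_eq_single i]
  · simp [apply_ite (fun f : Matrix (Fin 2) (Fin 2) ℤ => f c 0),
      apply_ite (fun f : Matrix (Fin 2) (Fin 2) ℤ => f c 1)]
  · intro k _ hk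
    simp [Ne.symm hk]
  · simp

lemma mul_L_entry (ε : Fin l → Bool) (M : Mat l) (i j : Fin l) (c d : Fin 2) :
    (M * Lmat l ε) (i,c) (j,d) =
      M (i,c) (j,0) * (if ε j then Bmat else 1) 0 d
      + M (i,c) (j,1) * (if ε j then Bmat else 1) 1 d := by
  rw [Matrix.mul_apply, Fintype.sum_prod_type]
  simp only [Lmat, Fin.sum_univ_two]
  rw [Finset.sum_eq_single j]
  · simp [apply_ite (fun f : Matrix (Fin 2) (Fin 2) ℤ => f 0 d),
      apply_ite (fun f : Matrix (Fin 2) (Fin 2) ℤ => f 1 d)]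
  · intro k _ hk
    simp [hk]
  · simp

lemma cond_iff (M : Mat l) :
    (∀ ε, Lmat l ε * M = M * Lmat l ε) ↔ Cond l M := by
  constructor
  · intro h i j
    have hi := h (fun k => decide (k = i))
    have hj := h (fun k => decide (k = j))
    by_cases hij : i = j
    · subst hij
      have e1 := congrFun (congrFun hi (i,1)) (i,0)
      have e2 := congrFun (congrFun hi (i,0)) (i,1)
      rw [L_mul_entry, mul_L_entry] at e1 e2
      simp [Bmat, Matrix.one_apply] at e1 e2
      refine ⟨by omega, fun h => absurd rfl h, by omega⟩
    · have e1 := congrFun (congrFun hi (i,1)) (j,0)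
      have e2 := congrFun (congrFun hi (i,1)) (j,1)
      have e3 := congrFun (congrFun hj (i,0)) (j,1)
      rw [L_mul_entry, mul_L_entry] at e1 e2 e3
      simp [Bmat, Matrix.one_apply, hij, Ne.symm hij] at e1 e2 e3
      refine ⟨by omega, fun _ => by omega, by omega⟩
  · intro hc ε
    ext ⟨i,c⟩ ⟨j,d⟩
    rw [L_mul_entry, mul_L_entry]
    obtain ⟨h1, h2, h3⟩ := hc i j
    by_cases hij : i = j
    · subst hij
      cases hε : ε i <;> fin_cases c <;> fin_cases d <;>
        simp [Bmat, Matrix.one_apply] <;> omega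
    · have h2' := h2 hij
      have hji : ¬ (j = i) := Ne.symm hij
      cases hεi : ε i <;> cases hεj : ε j <;> fin_cases c <;> fin_cases d <;>
        simp [Bmat, Matrix.one_apply] <;> omega

lemma Lmat_mul_self (ε : Fin l → Bool) : Lmat l ε * Lmat l ε = 1 := by
  ext ⟨i,c⟩ ⟨j,d⟩
  rw [L_mul_entry]
  by_cases hij : i = j
  · subst hij
    cases hε : ε i <;> fin_cases c <;> fin_cases d <;>
      simp [Lmat, Bmat, Matrix.one_apply, hε]
  · cases hε : ε i <;> fin_cases c <;> fin_cases d <;>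
      simp [Lmat, Bmat, Matrix.one_apply, hε, hij, Prod.ext_iff]

def Lgl (l : ℕ) (ε : Fin l → Bool) : GL2l l :=
  ⟨Lmat l ε, Lmat l ε, Lmat_mul_self ε, Lmat_mul_self ε⟩

lemma mem_centralizer_iff_cond (M : GL2l l) :
    M ∈ Subgroup.centralizer (scriptL l : Set (GL2l l)) ↔ Cond l M.val := by
  constructor
  · intro h
    refine (cond_iff M.val).1 (fun ε => ?_)
    have hm : Lgl l ε ∈ scriptL l := Subgroup.subset_closure ⟨ε, rfl⟩
    have := Subgroup.mem_centralizer_iff.1 h (Lgl l ε) hm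
    have := congrArg Units.val this
    simpa [Lgl] using this
  · intro hc
    rw [Subgroup.mem_centralizer_iff]
    intro g hg
    have hle : scriptL l ≤ Subgroup.centralizer {M} := by
      rw [scriptL, Subgroup.closure_le]
      rintro g ⟨ε, hε⟩
      rw [SetLike.mem_coe, Subgroup.mem_centralizer_iff]
      rintro x hx
      rw [Set.mem_singleton_iff] at hx
      rw [hx]
      refine Units.ext ?_
      show M.val * g.val = g.val * M.val
      rw [hε]
      exact ((cond_iff M.val).2 hc ε).symm
    exact (Subgroup.mem_centralizer_iff.1 (hle hg) M rfl).symm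

/-- The upper-left "plus" part. -/
def Pm (M : Mat l) : Matrix (Fin l) (Fin l) ℤ := fun i j => M (i,0) (j,0)

/-- The diagonal "minus" part. -/
def Qd (M : Mat l) (i : Fin l) : ℤ := M (i,1) (i,1)

lemma Pm_mul {M N : Mat l} (hN : Cond l N) : Pm (M * N) = Pm M * Pm N := by
  ext i j
  rw [Matrix.mul_apply]
  show (M * N) (i,0) (j,0) = _
  rw [Matrix.mul_apply, Fintype.sum_prod_type]
  simp only [Fin.sum_univ_two]
  refine Finset.sum_congr rfl (fun k _ => ?_)
  rw [(hN k j).1]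
  simp [Pm]

lemma Qd_mul {M N : Mat l} (hM : Cond l M) (_hN : Cond l N) (i : Fin l) :
    Qd (M * N) i = Qd M i * Qd N i := by
  show (M * N) (i,1) (i,1) = _
  rw [Matrix.mul_apply, Fintype.sum_prod_type]
  simp only [Fin.sum_univ_two]
  rw [Finset.sum_eq_single i]
  · rw [(hM i i).1]
    simp [Qd]
  · intro k _ hk
    rw [(hM i k).1, (hM i k).2.1 (Ne.symm hk)]
    ring
  · simp

lemma Pm_one : Pm (1 : Mat l) = 1 := by
  ext i j
  simp [Pm, Matrix.one_apply, Prod.ext_iff]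

lemma Qd_one (i : Fin l) : Qd (1 : Mat l) i = 1 := by
  simp [Qd, Matrix.one_apply]

abbrev Cent (l : ℕ) := Subgroup.centralizer (scriptL l : Set (GL2l l))

lemma cond_of_mem {M : GL2l l} (h : M ∈ Cent l) : Cond l M.val :=
  (mem_centralizer_iff_cond M).1 h

lemma val_mul_inv_val (M : Cent l) :
    (M.val.val : Mat l) * ((M.val⁻¹).val : Mat l) = 1 := by
  rw [← Units.val_mul, mul_inv_cancel, Units.val_one]

lemma inv_val_mul_val (M : Cent l) :
    ((M.val⁻¹).val : Mat l) * (M.val.val : Mat l) = 1 := by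
  rw [← Units.val_mul, inv_mul_cancel, Units.val_one]

lemma PmU_aux1 (M : Cent l) : Pm M.val.val * Pm (M.val⁻¹).val = 1 := by
  rw [← Pm_mul (cond_of_mem (inv_mem M.2)), val_mul_inv_val, Pm_one]

lemma PmU_aux2 (M : Cent l) : Pm (M.val⁻¹).val * Pm M.val.val = 1 := by
  rw [← Pm_mul (cond_of_mem M.2), inv_val_mul_val, Pm_one]

/-- `P` part as a unit. -/
def PmU (M : Cent l) : GLZ l :=
  ⟨Pm M.val.val, Pm (M.val⁻¹).val, PmU_aux1 M, PmU_aux2 M⟩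

lemma Qd_pm_one (M : Cent l) (i : Fin l) :
    Qd M.val.val i = 1 ∨ Qd M.val.val i = -1 := by
  have h : Qd M.val.val i * Qd (M.val⁻¹).val i = 1 := by
    rw [← Qd_mul (cond_of_mem M.2) (cond_of_mem (inv_mem M.2)), val_mul_inv_val, Qd_one]
  exact Int.isUnit_iff.1 (IsUnit.of_mul_eq_one _ h)

lemma PmU_mem (M : Cent l) : PmU M ∈ congr2 l := by
  rw [congr2, MonoidHom.mem_ker]
  refine Matrix.GeneralLinearGroup.ext (fun i j => ?_)
  rw [Matrix.GeneralLinearGroup.map_apply]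
  have h3 := (cond_of_mem M.2 i j).2.2
  show ((Pm M.val.val i j : ℤ) : ZMod 2) = ((1 : Matrix.GeneralLinearGroup (Fin l) (ZMod 2)) : Matrix (Fin l) (Fin l) (ZMod 2)) i j
  rw [Units.val_one, Matrix.one_apply]
  by_cases hij : i = j
  · subst hij
    rw [Pm, h3, if_pos rfl]
    rcases Qd_pm_one M i with hq | hq <;> rw [Qd] at hq <;> rw [hq] <;> push_cast <;>
      rw [show ((2:ZMod 2)) = 0 from by decide] <;> ring_nf <;> decide
  · rw [Pm, h3, (cond_of_mem M.2 i j).2.1 hij, if_neg hij]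
    push_cast
    rw [show ((2:ZMod 2)) = 0 from by decide]
    ring

def chi (q : ℤ) : ZMod 2 := if q = 1 then 0 else 1

/-- The homomorphism from the centralizer to `Λ_l[2] × (ℤ/2)^l`. -/
def Phi (l : ℕ) : Cent l →* congr2 l × Multiplicative (Fin l → ZMod 2) :=
  MonoidHom.mk' (fun M => (⟨PmU M, PmU_mem M⟩,
      Multiplicative.ofAdd (fun i => chi (Qd M.val.val i))))
    (by
      intro M N
      have hM := cond_of_mem M.2
      have hN := cond_of_mem N.2
      refine Prod.ext ?_ ?_
      · refine Subtype.ext (Units.ext ?_)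
        show Pm (M.val.val * N.val.val) = Pm M.val.val * Pm N.val.val
        exact Pm_mul hN
      · show Multiplicative.ofAdd _ = Multiplicative.ofAdd _ * Multiplicative.ofAdd _
        rw [← ofAdd_add]
        refine congrArg _ (funext fun i => ?_)
        show chi (Qd (M.val.val * N.val.val) i) = chi (Qd M.val.val i) + chi (Qd N.val.val i)
        rw [Qd_mul hM hN]
        rcases Qd_pm_one M i with h1 | h1 <;> rcases Qd_pm_one N i with h2 | h2 <;>
          rw [h1, h2] <;> decide)

lemma Phi_injective (l : ℕ) : Function.Injective (Phi l) := by
  intro M N h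
  have hP : Pm M.val.val = Pm N.val.val := congrArg (fun x => (x.1.val.val)) h
  have hQ : ∀ i, Qd M.val.val i = Qd N.val.val i := by
    intro i
    have hc : chi (Qd M.val.val i) = chi (Qd N.val.val i) :=
      congrArg (fun x => (Multiplicative.toAdd x.2) i) h
    rcases Qd_pm_one M i with h1 | h1 <;> rcases Qd_pm_one N i with h2 | h2 <;>
      rw [h1, h2] <;> rw [h1, h2] at hc <;> first | rfl | (exfalso; revert hc; decide)
  have hM := cond_of_mem M.2
  have hN := cond_of_mem N.2
  refine Subtype.ext (Units.ext ?_)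
  refine Matrix.ext ?_
  rintro ⟨i, c⟩ ⟨j, d⟩
  have hPij : M.val.val (i,0) (j,0) = N.val.val (i,0) (j,0) := congrFun (congrFun hP i) j
  fin_cases c <;> fin_cases d
  · exact hPij
  · -- (0,1)
    show M.val.val (i,0) (j,1) = N.val.val (i,0) (j,1)
    have e1 := (hM i j).2.2
    have e2 := (hN i j).2.2
    by_cases hij : i = j
    · subst hij
      have hqq := hQ i
      simp only [Qd] at hqq
      omega
    · have := (hM i j).2.1 hij
      have := (hN i j).2.1 hij
      omega
  · show M.val.val (i,1) (j,0) = N.val.val (i,1) (j,0)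
    rw [(hM i j).1, (hN i j).1]
  · show M.val.val (i,1) (j,1) = N.val.val (i,1) (j,1)
    by_cases hij : i = j
    · subst hij
      exact hQ i
    · rw [(hM i j).2.1 hij, (hN i j).2.1 hij]

section surj

/-- Build the centralizer matrix from `P` and diagonal `q`. -/
def bld (P : Matrix (Fin l) (Fin l) ℤ) (q : Fin l → ℤ) : Mat l :=
  fun a b =>
    if a.2 = 0 then
      (if b.2 = 0 then P a.1 b.1
       else (P a.1 b.1 - (if a.1 = b.1 then q a.1 else 0)) / 2)
    else
      (if b.2 = 0 then 0 else if a.1 = b.1 then q a.1 else 0)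

variable {P P' : Matrix (Fin l) (Fin l) ℤ} {q : Fin l → ℤ}

lemma bld_cond (hP2 : ∀ i j, (2:ℤ) ∣ P i j - (if i = j then q i else 0)) :
    Cond l (bld P q) := by
  intro i j
  refine ⟨rfl, fun hij => by simp [bld, hij], ?_⟩
  show P i j = 2 * ((P i j - (if i = j then q i else 0)) / 2) + (if i = j then q i else 0)
  rw [Int.mul_ediv_cancel' (hP2 i j)]
  ring

lemma bld_mul (hq : ∀ i, q i = 1 ∨ q i = -1)
    (hP2 : ∀ i j, (2:ℤ) ∣ P i j - (if i = j then q i else 0))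
    (hP2' : ∀ i j, (2:ℤ) ∣ P' i j - (if i = j then q i else 0))
    (hPP' : P * P' = 1) : bld P q * bld P' q = 1 := by
  ext ⟨i,c⟩ ⟨j,d⟩
  rw [Matrix.mul_apply, Fintype.sum_prod_type]
  simp only [Fin.sum_univ_two]
  have hPPij := congrFun (congrFun hPP' i) j
  rw [Matrix.mul_apply] at hPPij
  fin_cases c <;> fin_cases d
  · -- (0,0)
    show _ = (1 : Mat l) (i, (0:Fin 2)) (j, (0:Fin 2))
    simp only [bld, Matrix.one_apply, Prod.ext_iff]
    simpa [Matrix.one_apply] using hPPij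
  · -- (0,1)
    show ∑ k : Fin l, (bld P q (i,0) (k,0) * bld P' q (k,0) (j,1)
        + bld P q (i,0) (k,1) * bld P' q (k,1) (j,1)) = (1 : Mat l) (i, (0:Fin 2)) (j, (1:Fin 2))
    have key : (2:ℤ) * ∑ k, (bld P q (i,0) (k,0) * bld P' q (k,0) (j,1)
        + bld P q (i,0) (k,1) * bld P' q (k,1) (j,1)) = 0 := by
      rw [Finset.mul_sum]
      have step : ∀ k ∈ Finset.univ, (2:ℤ) * (bld P q (i,0) (k,0) * bld P' q (k,0) (j,1)
          + bld P q (i,0) (k,1) * bld P' q (k,1) (j,1))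
          = P i k * (P' k j - (if k = j then q k else 0))
            + (P i k - (if i = k then q i else 0)) * (if k = j then q k else 0) := by
        intro k _
        have ha := Int.mul_ediv_cancel' (hP2' k j)
        have hb := Int.mul_ediv_cancel' (hP2 i k)
        show (2:ℤ) * (P i k * ((P' k j - (if k = j then q k else 0)) / 2)
            + ((P i k - (if i = k then q i else 0)) / 2) * (if k = j then q k else 0)) = _
        linear_combination P i k * ha + (if k = j then q k else 0) * hb
      rw [Finset.sum_congr rfl step]
      have expand : ∀ k ∈ Finset.univ, P i k * (P' k j - (if k = j then q k else 0))
            + (P i k - (if i = k then q i else 0)) * (if k = j then q k else 0)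
          = P i k * P' k j - (if i = k then q i else 0) * (if k = j then q k else 0) := by
        intro k _; ring
      rw [Finset.sum_congr rfl expand, Finset.sum_sub_distrib, hPPij]
      have hsum : ∑ k, (if i = k then q i else 0) * (if k = j then q k else 0)
          = (if i = j then q i * q j else 0) := by
        rw [Finset.sum_eq_single i]
        · by_cases hij : i = j <;> simp [hij]
        · intro k _ hk; simp [Ne.symm hk]
        · simp
      rw [hsum]
      by_cases hij : i = j
      · subst hij
        rcases hq i with h | h <;> rw [h] <;> simp [Matrix.one_apply]
      · simp [hij, Matrix.one_apply]
    have h0 : (1 : Mat l) (i, (0:Fin 2)) (j, (1:Fin 2)) = 0 := by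
      simp [Matrix.one_apply, Prod.ext_iff]
    rw [h0]
    omega
  · -- (1,0)
    show _ = (1 : Mat l) (i, (1:Fin 2)) (j, (0:Fin 2))
    simp [bld, Matrix.one_apply, Prod.ext_iff]
  · -- (1,1)
    show ∑ k : Fin l, (bld P q (i,1) (k,0) * bld P' q (k,0) (j,1)
        + bld P q (i,1) (k,1) * bld P' q (k,1) (j,1)) = (1 : Mat l) (i, (1:Fin 2)) (j, (1:Fin 2))
    have lhs : ∑ k, (bld P q (i,1) (k,0) * bld P' q (k,0) (j,1)
        + bld P q (i,1) (k,1) * bld P' q (k,1) (j,1))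
        = (if i = j then q i * q j else 0) := by
      have step : ∀ k ∈ Finset.univ, (bld P q (i,1) (k,0) * bld P' q (k,0) (j,1)
          + bld P q (i,1) (k,1) * bld P' q (k,1) (j,1))
          = (if i = k then q i else 0) * (if k = j then q k else 0) := by
        intro k _
        show ((0:ℤ) * _ + (if i = k then q i else 0) * (if k = j then q k else 0)) = _
        ring
      rw [Finset.sum_congr rfl step, Finset.sum_eq_single i]
      · by_cases hij : i = j <;> simp [hij]
      · intro k _ hk; simp [Ne.symm hk]
      · simp
    rw [lhs]
    by_cases hij : i = j
    · subst hij
      rcases hq i with h | h <;> simp [h, Matrix.one_apply]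
    · simp [hij, Matrix.one_apply, Prod.ext_iff]

end surj

lemma Phi_surjective (l : ℕ) : Function.Surjective (Phi l) := by
  rintro ⟨⟨Pu, hPu⟩, g⟩
  set P : Matrix (Fin l) (Fin l) ℤ := Pu.val with hP
  set P' : Matrix (Fin l) (Fin l) ℤ := Pu.inv with hP'
  set εg : Fin l → ZMod 2 := Multiplicative.toAdd g with hεg
  set q : Fin l → ℤ := fun i => if εg i = 0 then 1 else -1 with hqdef
  have hq : ∀ i, q i = 1 ∨ q i = -1 := by
    intro i
    by_cases h : εg i = 0 <;> simp [hqdef, h]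
  have hmod : ∀ (A : GLZ l), A ∈ congr2 l → ∀ i j,
      (2:ℤ) ∣ A.val i j - (if i = j then 1 else 0) := by
    intro A hA i j
    rw [congr2, MonoidHom.mem_ker] at hA
    have e := (Matrix.GeneralLinearGroup.map_apply (Int.castRingHom (ZMod 2)) i j A).symm
    rw [hA] at e
    simp only [Units.val_one, Matrix.one_apply] at e
    -- e : f (A i j) = if i = j then 1 else 0  (in ZMod 2)
    have e2 : ((A.val i j - (if i = j then 1 else 0) : ℤ) : ZMod 2) = 0 := by
      push_cast
      rw [show ((Int.castRingHom (ZMod 2)) (A.val i j) : ZMod 2) = ((A.val i j : ℤ) : ZMod 2) from rfl] at e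
      rw [e]
      by_cases hij : i = j <;> simp [hij]
    have := (ZMod.intCast_zmod_eq_zero_iff_dvd _ 2).1 e2
    exact_mod_cast this
  have hPuinv : (Pu⁻¹ : GLZ l) ∈ congr2 l := inv_mem hPu
  have hP2 : ∀ i j, (2:ℤ) ∣ P i j - (if i = j then q i else 0) := by
    intro i j
    have hm := hmod Pu hPu i j
    rw [← hP] at hm
    by_cases hij : i = j
    · subst hij
      simp only [if_pos (rfl : i = i), if_true, ite_true] at hm ⊢
      rcases hq i with h | h <;> rw [h] <;> omega
    · simp only [if_neg hij] at hm ⊢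
      omega
  have hP2' : ∀ i j, (2:ℤ) ∣ P' i j - (if i = j then q i else 0) := by
    intro i j
    have hm := hmod Pu⁻¹ hPuinv i j
    have hval : ((Pu⁻¹ : GLZ l) : Matrix (Fin l) (Fin l) ℤ) = P' := rfl
    rw [hval] at hm
    by_cases hij : i = j
    · subst hij
      simp only [if_pos (rfl : i = i), if_true, ite_true] at hm ⊢
      rcases hq i with h | h <;> rw [h] <;> omega
    · simp only [if_neg hij] at hm ⊢
      omega
  have hPP' : P * P' = 1 := Pu.val_inv
  have hP'P : P' * P = 1 := Pu.inv_val
  refine ⟨⟨⟨bld P q, bld P' q, bld_mul hq hP2 hP2' hPP', bld_mul hq hP2' hP2 hP'P⟩, ?_⟩, ?_⟩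
  · rw [mem_centralizer_iff_cond]
    exact bld_cond hP2
  · refine Prod.ext ?_ ?_
    · refine Subtype.ext (Units.ext ?_)
      show Pm (bld P q) = P
      ext i j
      rfl
    · show Multiplicative.ofAdd (fun i => chi (Qd (bld P q) i)) = g
      rw [← ofAdd_toAdd g]
      refine congrArg _ (funext fun i => ?_)
      show chi (Qd (bld P q) i) = εg i
      have hb : Qd (bld P q) i = q i := by simp [Qd, bld]
      rw [hb]
      by_cases h : εg i = 0
      · simp [hqdef, h, chi]
      · have h1 : εg i = 1 := by
          have : ∀ x : ZMod 2, x ≠ 0 → x = 1 := by decide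
          exact this _ h
        simp [hqdef, h1, chi]

end S8

/-- The centralizer of `𝓛` in `GL_{2l}(ℤ)` is isomorphic to `Λ_l[2] × (ℤ/2)^l`. -/
theorem stmt8 (l : ℕ) (hl : 1 ≤ l) :
    Nonempty (Subgroup.centralizer (scriptL l : Set (GL2l l)) ≃*
      congr2 l × Multiplicative (Fin l → ZMod 2)) := by
  exact ⟨MulEquiv.ofBijective (S8.Phi l) ⟨S8.Phi_injective l, S8.Phi_surjective l⟩⟩
end
end

section
/- For every integer l ≥ 1, the map θ sending A = (a_{ij}) ∈ Λ_l[2] to the 2l × 2l integer matrix whose (i,j)-th 2×2 block is the matrix with rows (a_{ij}, (a_{ij} − δ_{ij})/2) and (0, δ_{ij}) (where δ is the Kronecker delta; these entries are integers since A ≡ I_l mod 2) is a well-defined injective group homomorphism from Λ_l[2] into GL_{2l}(ℤ), whose image is a subgroup of index 2^l in the centralizer of 𝓛 in GL_{2l}(ℤ). In particular, the principal level 2 congruence subgroup Λ_l[2] is isomorphic to a finite-index subgroup of the centralizer in GL_{2l}(ℤ) of a finite subgroup. -/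
noncomputable section

namespace Stmt9Aux

open Matrix Finset

/-- Parity condition: `A ≡ I mod 2`, entrywise. -/
def Cong (l : ℕ) (A : Matrix (Fin l) (Fin l) ℤ) : Prop :=
  ∀ i j, 2 ∣ (A i j - if i = j then 1 else 0)

lemma entry_cast_eq {l : ℕ} (A : Matrix (Fin l) (Fin l) ℤ) (i j : Fin l) :
    ((A i j : ℤ) : ZMod 2) = ((if i = j then 1 else 0 : ℤ) : ZMod 2) ↔
      2 ∣ (A i j - if i = j then 1 else 0) := by
  rw [← sub_eq_zero, ← Int.cast_sub, ZMod.intCast_zmod_eq_zero_iff_dvd]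
  norm_num

lemma mem_congr2_iff {l : ℕ} (A : GLZ l) :
    A ∈ congr2 l ↔ Cong l (A : Matrix (Fin l) (Fin l) ℤ) := by
  have key : A ∈ congr2 l ↔ ∀ i j,
      (((A : Matrix (Fin l) (Fin l) ℤ) i j : ZMod 2)) = (1 : Matrix (Fin l) (Fin l) (ZMod 2)) i j := by
    constructor
    · intro h i j
      have h1 : (Matrix.GeneralLinearGroup.map (Int.castRingHom (ZMod 2)) A) = 1 := h
      have h2 := congrArg (fun M : Matrix.GeneralLinearGroup (Fin l) (ZMod 2) =>
        (M : Matrix (Fin l) (Fin l) (ZMod 2)) i j) h1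
      exact h2
    · intro h
      show Matrix.GeneralLinearGroup.map (Int.castRingHom (ZMod 2)) A = 1
      ext i j
      exact h i j
  rw [key]
  constructor
  · intro h i j
    rw [← entry_cast_eq]
    have := h i j
    rw [Matrix.one_apply] at this
    rw [this]
    split <;> simp
  · intro h i j
    rw [Matrix.one_apply]
    have := (entry_cast_eq (A : Matrix (Fin l) (Fin l) ℤ) i j).2 (h i j)
    rw [this]
    split <;> simp

end Stmt9Aux
namespace Stmt9Aux2
open Matrix Finset Stmt9Aux

def thetaMat (l : ℕ) (A : Matrix (Fin l) (Fin l) ℤ) :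
    Matrix (Fin l × Fin 2) (Fin l × Fin 2) ℤ :=
  fun a b =>
    if a.2 = 0 then
      (if b.2 = 0 then A a.1 b.1 else (A a.1 b.1 - if a.1 = b.1 then 1 else 0) / 2)
    else
      (if b.2 = 0 then 0 else if a.1 = b.1 then 1 else 0)

lemma fin2 (s : Fin 2) : s = 0 ∨ s = 1 := by omega

@[simp] lemma theta00 {l} (A) (i j : Fin l) : thetaMat l A (i, 0) (j, 0) = A i j := by
  simp [thetaMat]
@[simp] lemma theta01 {l} (A) (i j : Fin l) :
    thetaMat l A (i, 0) (j, 1) = (A i j - if i = j then 1 else 0) / 2 := by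
  simp [thetaMat]
@[simp] lemma theta10 {l} (A) (i j : Fin l) : thetaMat l A (i, 1) (j, 0) = 0 := by
  simp [thetaMat]
@[simp] lemma theta11 {l} (A) (i j : Fin l) :
    thetaMat l A (i, 1) (j, 1) = if i = j then 1 else 0 := by
  simp [thetaMat]

lemma mul_apply2 {l : ℕ} (M N : Matrix (Fin l × Fin 2) (Fin l × Fin 2) ℤ) (a b) :
    (M * N) a b = ∑ k : Fin l, (M a (k,0) * N (k,0) b + M a (k,1) * N (k,1) b) := by
  rw [Matrix.mul_apply, Fintype.sum_prod_type]
  exact Finset.sum_congr rfl fun k _ => Fin.sum_univ_two _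

lemma delta_sum {l : ℕ} (i j : Fin l) :
    ∑ k : Fin l, (if i = k then (1:ℤ) else 0) * (if k = j then 1 else 0)
      = if i = j then 1 else 0 := by
  simp [ite_mul, Finset.sum_ite_eq]

lemma theta_one (l : ℕ) : thetaMat l 1 = 1 := by
  ext ⟨i, s⟩ ⟨j, t⟩
  rcases fin2 s with rfl | rfl <;> rcases fin2 t with rfl | rfl <;>
    simp [Matrix.one_apply, Prod.ext_iff]

lemma theta_mul {l : ℕ} {A B : Matrix (Fin l) (Fin l) ℤ}
    (hA : Cong l A) (hB : Cong l B) :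
    thetaMat l (A * B) = thetaMat l A * thetaMat l B := by
  ext ⟨i, s⟩ ⟨j, t⟩
  rw [mul_apply2]
  rcases fin2 s with rfl | rfl <;> rcases fin2 t with rfl | rfl
  · simp [Matrix.mul_apply]
  · simp only [theta00, theta01, theta10, theta11]
    have h2 : 2 * (∑ k : Fin l, (A i k * ((B k j - if k = j then 1 else 0) / 2) +
        ((A i k - if i = k then 1 else 0) / 2) * (if k = j then 1 else 0)))
        = (A * B) i j - if i = j then 1 else 0 := by
      rw [Finset.mul_sum]
      have hterm : ∀ k : Fin l,
          2 * (A i k * ((B k j - if k = j then 1 else 0) / 2) +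
            ((A i k - if i = k then 1 else 0) / 2) * (if k = j then 1 else 0))
          = A i k * B k j - (if i = k then (1:ℤ) else 0) * (if k = j then 1 else 0) := by
        intro k
        obtain ⟨x, hx⟩ := hA i k
        obtain ⟨y, hy⟩ := hB k j
        have e1 : (A i k - if i = k then (1:ℤ) else 0) / 2 = x := by omega
        have e2 : (B k j - if k = j then (1:ℤ) else 0) / 2 = y := by omega
        rw [e1, e2,
          show A i k = 2 * x + (if i = k then (1:ℤ) else 0) from by omega,
          show B k j = 2 * y + (if k = j then (1:ℤ) else 0) from by omega]
        ring
      rw [Finset.sum_congr rfl fun k _ => hterm k, Finset.sum_sub_distrib,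
        ← Matrix.mul_apply, delta_sum]
    have hd : 2 ∣ ((A * B) i j - if i = j then 1 else 0) := ⟨_, h2.symm⟩
    omega
  · simp
  · simp [delta_sum]

end Stmt9Aux2
namespace Stmt9Aux3
open Matrix Finset Stmt9Aux Stmt9Aux2

def D (b : Bool) : Fin 2 → Fin 2 → ℤ :=
  fun s t => if b then Bmat s t else (1 : Matrix (Fin 2) (Fin 2) ℤ) s t

lemma Lmat_apply {l : ℕ} (ε : Fin l → Bool) (k j : Fin l) (u t : Fin 2) :
    Lmat l ε (k, u) (j, t) = if k = j then D (ε k) u t else 0 := rfl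

@[simp] lemma D00 (b : Bool) : D b 0 0 = 1 := by cases b <;> simp [D, Bmat, Matrix.one_apply]
@[simp] lemma D01 (b : Bool) : D b 0 1 = if b then 1 else 0 := by
  cases b <;> simp [D, Bmat, Matrix.one_apply]
@[simp] lemma D10 (b : Bool) : D b 1 0 = 0 := by cases b <;> simp [D, Bmat, Matrix.one_apply]
@[simp] lemma D11 (b : Bool) : D b 1 1 = if b then -1 else 1 := by
  cases b <;> simp [D, Bmat, Matrix.one_apply]

lemma mul_L {l : ℕ} (M : Matrix (Fin l × Fin 2) (Fin l × Fin 2) ℤ) (ε : Fin l → Bool)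
    (a : Fin l × Fin 2) (j : Fin l) (t : Fin 2) :
    (M * Lmat l ε) a (j, t) = M a (j, 0) * D (ε j) 0 t + M a (j, 1) * D (ε j) 1 t := by
  rw [mul_apply2]
  simp only [Lmat_apply, mul_ite, mul_zero]
  rw [Finset.sum_add_distrib]
  simp [Finset.sum_ite_eq']

lemma L_mul {l : ℕ} (M : Matrix (Fin l × Fin 2) (Fin l × Fin 2) ℤ) (ε : Fin l → Bool)
    (i : Fin l) (s : Fin 2) (b : Fin l × Fin 2) :
    (Lmat l ε * M) (i, s) b = D (ε i) s 0 * M (i, 0) b + D (ε i) s 1 * M (i, 1) b := by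
  rw [mul_apply2]
  simp only [Lmat_apply, ite_mul, zero_mul]
  rw [Finset.sum_add_distrib]
  simp [Finset.sum_ite_eq]

lemma theta_comm {l : ℕ} {A : Matrix (Fin l) (Fin l) ℤ} (hA : Cong l A) (ε : Fin l → Bool) :
    Lmat l ε * thetaMat l A = thetaMat l A * Lmat l ε := by
  ext ⟨i, s⟩ ⟨j, t⟩
  rw [L_mul, mul_L]
  have hd := hA i j
  by_cases hij : i = j
  · subst hij
    cases hεi : ε i <;> rcases fin2 s with rfl | rfl <;> rcases fin2 t with rfl | rfl <;>
      simp [hεi] at hd ⊢ <;> omega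
  · simp only [if_neg hij] at hd
    cases hεi : ε i <;> cases hεj : ε j <;>
      rcases fin2 s with rfl | rfl <;> rcases fin2 t with rfl | rfl <;>
      simp [hεi, hεj, hij] <;> omega

lemma L_sq {l : ℕ} (ε : Fin l → Bool) : Lmat l ε * Lmat l ε = 1 := by
  ext ⟨i, s⟩ ⟨j, t⟩
  rw [L_mul]
  rw [Matrix.one_apply]
  simp only [Lmat_apply, Prod.mk.injEq]
  by_cases hij : i = j
  · subst hij
    cases hεi : ε i <;> rcases fin2 s with rfl | rfl <;> rcases fin2 t with rfl | rfl <;>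
      simp [hεi]
  · cases hεi : ε i <;> rcases fin2 s with rfl | rfl <;> rcases fin2 t with rfl | rfl <;>
      simp [hεi, hij]

/-- `Lmat` as a unit of the matrix ring. -/
def Lunit (l : ℕ) (ε : Fin l → Bool) : GL2l l := ⟨Lmat l ε, Lmat l ε, L_sq ε, L_sq ε⟩

lemma Lunit_mem (l : ℕ) (ε : Fin l → Bool) : Lunit l ε ∈ scriptL l :=
  Subgroup.subset_closure ⟨ε, rfl⟩

section Structure

variable {l : ℕ} {M : Matrix (Fin l × Fin 2) (Fin l × Fin 2) ℤ}
  (hc : ∀ ε : Fin l → Bool, Lmat l ε * M = M * Lmat l ε)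

include hc

lemma struct_a (i j : Fin l) : M (i, 1) (j, 0) = 0 := by
  have h := congrFun (congrFun (hc (fun k => k == i)) (i, 1)) (j, 0)
  rw [L_mul, mul_L] at h
  simp at h
  omega

lemma struct_b (i j : Fin l) (hij : i ≠ j) : M (i, 1) (j, 1) = 0 := by
  have h := congrFun (congrFun (hc (fun k => k == i)) (i, 1)) (j, 1)
  rw [L_mul, mul_L] at h
  have ha := struct_a hc i j
  have : (j == i) = false := by simp [Ne.symm hij]
  simp [this, ha] at h
  omega

lemma struct_c (i j : Fin l) :
    M (i, 0) (j, 0) = 2 * M (i, 0) (j, 1) + if i = j then M (i, 1) (i, 1) else 0 := by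
  by_cases hij : i = j
  · subst hij
    have h := congrFun (congrFun (hc (fun k => k == i)) (i, 0)) (i, 1)
    rw [L_mul, mul_L] at h
    simp at h
    omega
  · have h := congrFun (congrFun (hc (fun k => k == j)) (i, 0)) (j, 1)
    rw [L_mul, mul_L] at h
    have : (i == j) = false := by simp [hij]
    simp [this, hij] at h
    omega

end Structure

end Stmt9Aux3
namespace Stmt9Aux4
open Matrix Finset Stmt9Aux Stmt9Aux2 Stmt9Aux3

variable {l : ℕ}

lemma cong_coe (A : congr2 l) : Cong l ((A : GLZ l) : Matrix (Fin l) (Fin l) ℤ) :=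
  (mem_congr2_iff _).1 A.2

lemma cong_inv (A : congr2 l) : Cong l (((A : GLZ l)⁻¹ : GLZ l) : Matrix (Fin l) (Fin l) ℤ) :=
  (mem_congr2_iff _).1 (inv_mem A.2)

lemma val_mul_inv (A : congr2 l) :
    ((A : GLZ l) : Matrix (Fin l) (Fin l) ℤ) * (((A : GLZ l)⁻¹ : GLZ l) : Matrix (Fin l) (Fin l) ℤ)
      = 1 := by
  rw [← Units.val_mul]; simp

lemma val_inv_mul (A : congr2 l) :
    (((A : GLZ l)⁻¹ : GLZ l) : Matrix (Fin l) (Fin l) ℤ) * ((A : GLZ l) : Matrix (Fin l) (Fin l) ℤ)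
      = 1 := by
  rw [← Units.val_mul]; simp

/-- The embedding `θ`. -/
def thetaHom (l : ℕ) : congr2 l →* GL2l l where
  toFun A := ⟨thetaMat l ((A : GLZ l) : Matrix (Fin l) (Fin l) ℤ),
    thetaMat l (((A : GLZ l)⁻¹ : GLZ l) : Matrix (Fin l) (Fin l) ℤ),
    by rw [← theta_mul (cong_coe A) (cong_inv A), val_mul_inv, theta_one],
    by rw [← theta_mul (cong_inv A) (cong_coe A), val_inv_mul, theta_one]⟩
  map_one' := by
    apply Units.ext
    show thetaMat l _ = _
    simp only [OneMemClass.coe_one, Units.val_one, theta_one]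
  map_mul' A B := by
    apply Units.ext
    show thetaMat l _ = _
    simp only [Subgroup.coe_mul, Units.val_mul]
    exact theta_mul (cong_coe A) (cong_coe B)

lemma thetaHom_val (A : congr2 l) :
    ((thetaHom l A : GL2l l) : Matrix (Fin l × Fin 2) (Fin l × Fin 2) ℤ)
      = thetaMat l ((A : GLZ l) : Matrix (Fin l) (Fin l) ℤ) := rfl

lemma theta_inj : Function.Injective (thetaHom l) := by
  rw [injective_iff_map_eq_one]
  intro A h
  have hval : thetaMat l ((A : GLZ l) : Matrix (Fin l) (Fin l) ℤ) = 1 :=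
    congrArg Units.val h
  have : ((A : GLZ l) : Matrix (Fin l) (Fin l) ℤ) = 1 := by
    ext i j
    have := congrFun (congrFun hval (i, 0)) (j, 0)
    rw [theta00] at this
    rw [this]
    simp [Matrix.one_apply, Prod.ext_iff]
  ext i j
  rw [this]
  simp

lemma range_le : (thetaHom l).range ≤ Subgroup.centralizer (scriptL l : Set (GL2l l)) := by
  rintro _ ⟨A, rfl⟩
  rw [Subgroup.mem_centralizer_iff]
  intro g hg
  have hle : scriptL l ≤ Subgroup.centralizer {thetaHom l A} := by
    rw [scriptL, Subgroup.closure_le]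
    rintro g ⟨ε, hε⟩
    rw [SetLike.mem_coe, Subgroup.mem_centralizer_iff]
    rintro h rfl
    apply Units.ext
    show _ * (g : Matrix (Fin l × Fin 2) (Fin l × Fin 2) ℤ)
        = (g : Matrix (Fin l × Fin 2) (Fin l × Fin 2) ℤ) * _
    rw [hε, thetaHom_val, ← theta_comm (cong_coe A) ε]
  exact ((hle hg) (thetaHom l A) rfl).symm

end Stmt9Aux4
namespace Stmt9Aux5
open Matrix Finset Stmt9Aux Stmt9Aux2 Stmt9Aux3 Stmt9Aux4

variable {l : ℕ}

abbrev Cgrp (l : ℕ) : Subgroup (GL2l l) := Subgroup.centralizer (scriptL l : Set (GL2l l))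

lemma comm_of_mem {M : GL2l l} (hM : M ∈ Cgrp l) (ε : Fin l → Bool) :
    Lmat l ε * (M : Matrix (Fin l × Fin 2) (Fin l × Fin 2) ℤ)
      = (M : Matrix (Fin l × Fin 2) (Fin l × Fin 2) ℤ) * Lmat l ε := by
  have h := Subgroup.mem_centralizer_iff.1 hM (Lunit l ε) (Lunit_mem l ε)
  have := congrArg Units.val h
  simpa [Units.val_mul, Lunit] using this

lemma dmul {M N : Matrix (Fin l × Fin 2) (Fin l × Fin 2) ℤ}
    (hM : ∀ ε, Lmat l ε * M = M * Lmat l ε) (i : Fin l) :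
    (M * N) (i, 1) (i, 1) = M (i, 1) (i, 1) * N (i, 1) (i, 1) := by
  rw [mul_apply2]
  have hterm : ∀ k : Fin l, M (i,1) (k,0) * N (k,0) (i,1) + M (i,1) (k,1) * N (k,1) (i,1)
      = if i = k then M (i,1) (i,1) * N (i,1) (i,1) else 0 := by
    intro k
    by_cases h : i = k
    · subst h; simp [struct_a hM]
    · rw [struct_a hM, struct_b hM i k h]; simp [h]
  rw [Finset.sum_congr rfl fun k _ => hterm k, Finset.sum_ite_eq]
  simp

lemma dval_unit {M : GL2l l} (hM : M ∈ Cgrp l) (i : Fin l) :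
    (M : Matrix (Fin l × Fin 2) (Fin l × Fin 2) ℤ) (i,1) (i,1) = 1 ∨
      (M : Matrix (Fin l × Fin 2) (Fin l × Fin 2) ℤ) (i,1) (i,1) = -1 := by
  have h1 : ((M : Matrix (Fin l × Fin 2) (Fin l × Fin 2) ℤ) *
      ((M⁻¹ : GL2l l) : Matrix (Fin l × Fin 2) (Fin l × Fin 2) ℤ)) (i,1) (i,1) = 1 := by
    rw [← Units.val_mul]; simp [Matrix.one_apply]
  rw [dmul (comm_of_mem hM)] at h1
  exact Int.isUnit_iff.1 (IsUnit.of_mul_eq_one _ h1)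

def phifun (M : Cgrp l) : Fin l → ℤˣ := fun i =>
  if ((M : GL2l l) : Matrix (Fin l × Fin 2) (Fin l × Fin 2) ℤ) (i,1) (i,1) = 1 then 1 else -1

def phi (l : ℕ) : Cgrp l →* (Fin l → ℤˣ) :=
  MonoidHom.mk' phifun (by
    intro M N
    funext i
    have hmul : (((M : GL2l l) : Matrix (Fin l × Fin 2) (Fin l × Fin 2) ℤ) *
          ((N : GL2l l) : Matrix (Fin l × Fin 2) (Fin l × Fin 2) ℤ)) (i,1) (i,1)
        = ((M : GL2l l) : Matrix (Fin l × Fin 2) (Fin l × Fin 2) ℤ) (i,1) (i,1) *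
          ((N : GL2l l) : Matrix (Fin l × Fin 2) (Fin l × Fin 2) ℤ) (i,1) (i,1) :=
      dmul (comm_of_mem M.2) i
    rcases dval_unit M.2 i with hM | hM <;> rcases dval_unit N.2 i with hN | hN <;>
      simp [phifun, Pi.mul_apply, hmul, hM, hN])

lemma phi_apply (M : Cgrp l) : phi l M = phifun M := rfl

def diagU (l : ℕ) (u : Fin l → ℤˣ) : GL2l l :=
  have key : diagonal (fun a : Fin l × Fin 2 => (u a.1 : ℤ)) *
      diagonal (fun a : Fin l × Fin 2 => (u a.1 : ℤ)) = 1 := by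
    rw [diagonal_mul_diagonal]
    have : (fun a : Fin l × Fin 2 => (u a.1 : ℤ) * (u a.1 : ℤ)) = fun _ => 1 :=
      funext fun a => by
        rw [← Units.val_mul, Int.units_mul_self, Units.val_one]
    rw [this, diagonal_one]
  ⟨diagonal (fun a => (u a.1 : ℤ)), diagonal (fun a => (u a.1 : ℤ)), key, key⟩

lemma diagU_comm (u : Fin l → ℤˣ) (ε : Fin l → Bool) :
    Lmat l ε * diagonal (fun a : Fin l × Fin 2 => (u a.1 : ℤ))
      = diagonal (fun a : Fin l × Fin 2 => (u a.1 : ℤ)) * Lmat l ε := by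
  ext ⟨i, s⟩ ⟨j, t⟩
  rw [Matrix.mul_diagonal, Matrix.diagonal_mul, Lmat_apply]
  by_cases hij : i = j
  · subst hij; simp [mul_comm]
  · simp [hij]

lemma diagU_mem (u : Fin l → ℤˣ) : diagU l u ∈ Cgrp l := by
  rw [Subgroup.mem_centralizer_iff]
  intro g hg
  have hle : scriptL l ≤ Subgroup.centralizer {diagU l u} := by
    rw [scriptL, Subgroup.closure_le]
    rintro g ⟨ε, hε⟩
    rw [SetLike.mem_coe, Subgroup.mem_centralizer_iff]
    rintro h rfl
    apply Units.ext
    show ((diagU l u : GL2l l) : Matrix (Fin l × Fin 2) (Fin l × Fin 2) ℤ) * g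
        = (g : Matrix (Fin l × Fin 2) (Fin l × Fin 2) ℤ) * _
    rw [hε]
    exact (diagU_comm u ε).symm
  exact ((hle hg) (diagU l u) rfl).symm

lemma phi_surj : Function.Surjective (phi l) := by
  intro u
  refine ⟨⟨diagU l u, diagU_mem u⟩, ?_⟩
  funext i
  rw [phi_apply]
  show (if ((diagU l u : GL2l l) : Matrix (Fin l × Fin 2) (Fin l × Fin 2) ℤ) (i,1) (i,1) = 1
    then (1:ℤˣ) else -1) = u i
  have : ((diagU l u : GL2l l) : Matrix (Fin l × Fin 2) (Fin l × Fin 2) ℤ) (i,1) (i,1)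
      = (u i : ℤ) := by
    show diagonal (fun a : Fin l × Fin 2 => (u a.1 : ℤ)) (i,1) (i,1) = _
    rw [Matrix.diagonal_apply_eq]
  rw [this]
  rcases Int.units_eq_one_or (u i) with h | h <;> rw [h] <;> simp

lemma ker_eq : (phi l).ker = (thetaHom l).range.subgroupOf (Cgrp l) := by
  ext M
  rw [MonoidHom.mem_ker, Subgroup.mem_subgroupOf]
  constructor
  · intro h
    have hcomm := comm_of_mem M.2
    have hd1 : ∀ i, ((M : GL2l l) : Matrix (Fin l × Fin 2) (Fin l × Fin 2) ℤ) (i,1) (i,1) = 1 := by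
      intro i
      have hi : phifun M i = 1 := congrFun (h : phifun M = 1) i
      by_cases hc : ((M : GL2l l) : Matrix (Fin l × Fin 2) (Fin l × Fin 2) ℤ) (i,1) (i,1) = 1
      · exact hc
      · rw [phifun, if_neg hc] at hi; exact absurd hi (by decide)
    set Mm := ((M : GL2l l) : Matrix (Fin l × Fin 2) (Fin l × Fin 2) ℤ) with hMm
    have hNmem : ((M : GL2l l)⁻¹ : GL2l l) ∈ Cgrp l := by
      exact inv_mem M.2
    have hcommN := comm_of_mem hNmem
    set Nm := (((M : GL2l l)⁻¹ : GL2l l) : Matrix (Fin l × Fin 2) (Fin l × Fin 2) ℤ) with hNm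
    have hMN : Mm * Nm = 1 := by rw [hMm, hNm, ← Units.val_mul]; simp
    have hNM : Nm * Mm = 1 := by rw [hMm, hNm, ← Units.val_mul]; simp
    -- the candidate matrices
    set a : Matrix (Fin l) (Fin l) ℤ := fun i j => Mm (i,0) (j,0) with ha
    set a' : Matrix (Fin l) (Fin l) ℤ := fun i j => Nm (i,0) (j,0) with ha'
    have key : ∀ (P Q : Matrix (Fin l × Fin 2) (Fin l × Fin 2) ℤ),
        (∀ ε, Lmat l ε * Q = Q * Lmat l ε) → ∀ i j : Fin l,
        (P * Q) (i,0) (j,0) = ∑ k : Fin l, P (i,0) (k,0) * Q (k,0) (j,0) := by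
      intro P Q hQ i j
      rw [mul_apply2]
      apply Finset.sum_congr rfl
      intro k _
      rw [struct_a hQ]
      ring
    have haa' : a * a' = 1 := by
      ext i j
      rw [Matrix.mul_apply]
      have := (key Mm Nm hcommN i j).symm
      rw [hMN] at this
      rw [ha, ha']
      rw [this]
      simp [Matrix.one_apply, Prod.ext_iff]
    have ha'a : a' * a = 1 := by
      ext i j
      rw [Matrix.mul_apply]
      have := (key Nm Mm hcomm i j).symm
      rw [hNM] at this
      rw [ha, ha']
      rw [this]
      simp [Matrix.one_apply, Prod.ext_iff]
    set A : GLZ l := ⟨a, a', haa', ha'a⟩ with hA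
    have hAcong : Cong l a := by
      intro i j
      have hsc := struct_c hcomm i j
      rw [hd1 i] at hsc
      refine ⟨Mm (i,0) (j,1), ?_⟩
      rw [ha]
      show Mm (i,0) (j,0) - _ = _
      omega
    have hAmem : A ∈ congr2 l := (mem_congr2_iff A).2 hAcong
    refine ⟨⟨A, hAmem⟩, ?_⟩
    apply Units.ext
    rw [thetaHom_val]
    ext ⟨i, s⟩ ⟨j, t⟩
    show thetaMat l a (i,s) (j,t) = Mm (i,s) (j,t)
    rcases fin2 s with rfl | rfl <;> rcases fin2 t with rfl | rfl
    · rw [theta00]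
    · rw [theta01]
      have hsc := struct_c hcomm i j
      rw [hd1 i] at hsc
      have : a i j = Mm (i,0) (j,0) := rfl
      omega
    · rw [theta10, struct_a hcomm]
    · rw [theta11]
      by_cases hij : i = j
      · subst hij; rw [hd1 i, if_pos rfl]
      · rw [struct_b hcomm i j hij, if_neg hij]
  · rintro ⟨A, hA⟩
    show phifun M = 1
    funext i
    rw [phifun]
    have : ((M : GL2l l) : Matrix (Fin l × Fin 2) (Fin l × Fin 2) ℤ) (i,1) (i,1) = 1 := by
      rw [← hA, thetaHom_val, theta11, if_pos rfl]
    rw [if_pos this]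
    rfl

lemma relindex_eq :
    (thetaHom l).range.relIndex (Subgroup.centralizer (scriptL l : Set (GL2l l))) = 2 ^ l := by
  rw [Subgroup.relIndex]
  rw [show (thetaHom l).range.subgroupOf (Cgrp l) = (phi l).ker from ker_eq.symm]
  rw [Subgroup.index_ker, MonoidHom.range_eq_top.2 phi_surj, Subgroup.card_top]
  rw [Nat.card_pi]
  simp [Nat.card_eq_fintype_card]

end Stmt9Aux5

/-- The explicit embedding `θ : Λ_l[2] → GL_{2l}(ℤ)` is an injective homomorphism whose
image has index `2^l` in the centralizer of `𝓛`. -/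
theorem stmt9 (l : ℕ) (hl : 1 ≤ l) :
    ∃ θ : congr2 l →* GL2l l,
      (∀ (A : congr2 l) (i j : Fin l),
        ((θ A : GL2l l) : Matrix (Fin l × Fin 2) (Fin l × Fin 2) ℤ) (i, 0) (j, 0) =
            ((A : GLZ l) : Matrix (Fin l) (Fin l) ℤ) i j ∧
        2 * ((θ A : GL2l l) : Matrix (Fin l × Fin 2) (Fin l × Fin 2) ℤ) (i, 0) (j, 1) =
            ((A : GLZ l) : Matrix (Fin l) (Fin l) ℤ) i j - (if i = j then 1 else 0) ∧
        ((θ A : GL2l l) : Matrix (Fin l × Fin 2) (Fin l × Fin 2) ℤ) (i, 1) (j, 0) = 0 ∧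
        ((θ A : GL2l l) : Matrix (Fin l × Fin 2) (Fin l × Fin 2) ℤ) (i, 1) (j, 1) =
            (if i = j then 1 else 0)) ∧
      Function.Injective θ ∧
      θ.range ≤ Subgroup.centralizer (scriptL l : Set (GL2l l)) ∧
      θ.range.relIndex (Subgroup.centralizer (scriptL l : Set (GL2l l))) = 2 ^ l := by
  refine ⟨Stmt9Aux4.thetaHom l, ?_, Stmt9Aux4.theta_inj, Stmt9Aux4.range_le,
    Stmt9Aux5.relindex_eq⟩
  intro A i j
  rw [Stmt9Aux4.thetaHom_val]
  refine ⟨Stmt9Aux2.theta00 _ i j, ?_, Stmt9Aux2.theta10 _ i j, Stmt9Aux2.theta11 _ i j⟩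
  rw [Stmt9Aux2.theta01]
  have := Stmt9Aux4.cong_coe A i j
  omega
end
end

section
/- Let l ≥ 1, p ≥ 0, q ≥ 0 be integers, set d = 2l + p + q, and let D be the subgroup of GL_d(ℤ) generated by −I_d together with all block-diagonal matrices Diag(D₁, D₂, ε·I_q) with D₁ ∈ 𝓛, D₂ diagonal in GL_p(ℤ), ε ∈ {±1}. Then every matrix M ∈ GL_d(ℤ) centralizing D is block-diagonal with respect to the decomposition d = 2l + p + q: M = Diag(M₁₁, M₂₂, M₃₃) with M₁₁ of size 2l × 2l, M₂₂ of size p × p, and M₃₃ of size q × q; moreover M₂₂ is a diagonal matrix with entries ±1. -/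
noncomputable section

namespace Stmt12Aux

variable (l p q : ℕ)

/-- The diagonal function of `Dmat l p q (fun _ => false) d2 e`. -/
def fdiag (d2 : Fin p → ℤˣ) (e : ℤˣ) : BIdx l p q → ℤ
  | Sum.inl _ => 1
  | Sum.inr (Sum.inl i) => (d2 i : ℤ)
  | Sum.inr (Sum.inr _) => (e : ℤ)

lemma dmat_eq_diagonal (d2 : Fin p → ℤˣ) (e : ℤˣ) :
    Dmat l p q (fun _ => false) d2 e = Matrix.diagonal (fdiag l p q d2 e) := by
  ext a b
  rcases a with a | i | i <;> rcases b with b | j | j <;>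
    simp [Dmat, Lmat, fdiag, Matrix.diagonal, Matrix.one_apply, Prod.ext_iff, and_comm, ite_and]

lemma fdiag_sq (d2 : Fin p → ℤˣ) (e : ℤˣ) (a : BIdx l p q) :
    fdiag l p q d2 e a * fdiag l p q d2 e a = 1 := by
  rcases a with a | i | i <;>
    simp [fdiag, ← Units.val_mul, Int.units_mul_self]

lemma diag_sq (d2 : Fin p → ℤˣ) (e : ℤˣ) :
    Matrix.diagonal (fdiag l p q d2 e) * Matrix.diagonal (fdiag l p q d2 e) = 1 := by
  rw [Matrix.diagonal_mul_diagonal,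
    show (fun a => fdiag l p q d2 e a * fdiag l p q d2 e a) = fun _ => (1 : ℤ) from
      funext (fdiag_sq l p q d2 e)]
  exact Matrix.diagonal_one

/-- The generator `Dmat l p q (fun _ => false) d2 e` as an element of `GL`. -/
def DGL (d2 : Fin p → ℤˣ) (e : ℤˣ) : Matrix.GeneralLinearGroup (BIdx l p q) ℤ :=
  ⟨Matrix.diagonal (fdiag l p q d2 e), Matrix.diagonal (fdiag l p q d2 e),
    diag_sq l p q d2 e, diag_sq l p q d2 e⟩

lemma DGL_mem (d2 : Fin p → ℤˣ) (e : ℤˣ) : DGL l p q d2 e ∈ DSub l p q := by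
  apply Subgroup.subset_closure
  exact Or.inr ⟨fun _ => false, d2, e, (dmat_eq_diagonal l p q d2 e).symm⟩

end Stmt12Aux

/-- Any matrix centralizing `D` is block-diagonal with respect to `d = 2l + p + q`,
with middle block diagonal having entries `±1`. -/
theorem stmt12 (l p q : ℕ) (hl : 1 ≤ l)
    (M : Matrix.GeneralLinearGroup (BIdx l p q) ℤ)
    (hM : M ∈ Subgroup.centralizer
      (DSub l p q : Set (Matrix.GeneralLinearGroup (BIdx l p q) ℤ))) :
    (∀ (a : Fin l × Fin 2) (i : Fin p),
      (M : Matrix (BIdx l p q) (BIdx l p q) ℤ) (Sum.inl a) (Sum.inr (Sum.inl i)) = 0 ∧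
      (M : Matrix (BIdx l p q) (BIdx l p q) ℤ) (Sum.inr (Sum.inl i)) (Sum.inl a) = 0) ∧
    (∀ (a : Fin l × Fin 2) (i : Fin q),
      (M : Matrix (BIdx l p q) (BIdx l p q) ℤ) (Sum.inl a) (Sum.inr (Sum.inr i)) = 0 ∧
      (M : Matrix (BIdx l p q) (BIdx l p q) ℤ) (Sum.inr (Sum.inr i)) (Sum.inl a) = 0) ∧
    (∀ (i : Fin p) (j : Fin q),
      (M : Matrix (BIdx l p q) (BIdx l p q) ℤ) (Sum.inr (Sum.inl i)) (Sum.inr (Sum.inr j)) = 0 ∧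
      (M : Matrix (BIdx l p q) (BIdx l p q) ℤ) (Sum.inr (Sum.inr j)) (Sum.inr (Sum.inl i)) = 0) ∧
    (∀ i j : Fin p, i ≠ j →
      (M : Matrix (BIdx l p q) (BIdx l p q) ℤ) (Sum.inr (Sum.inl i)) (Sum.inr (Sum.inl j)) = 0) ∧
    (∀ i : Fin p,
      (M : Matrix (BIdx l p q) (BIdx l p q) ℤ) (Sum.inr (Sum.inl i)) (Sum.inr (Sum.inl i)) = 1 ∨
      (M : Matrix (BIdx l p q) (BIdx l p q) ℤ) (Sum.inr (Sum.inl i)) (Sum.inr (Sum.inl i)) = -1) := by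
  classical
  have key : ∀ (d2 : Fin p → ℤˣ) (e : ℤˣ) (a c : BIdx l p q),
      Stmt12Aux.fdiag l p q d2 e a ≠ Stmt12Aux.fdiag l p q d2 e c →
      (M : Matrix (BIdx l p q) (BIdx l p q) ℤ) a c = 0 := by
    intro d2 e a c hne
    have h := hM (Stmt12Aux.DGL l p q d2 e) (Stmt12Aux.DGL_mem l p q d2 e)
    have h' : Matrix.diagonal (Stmt12Aux.fdiag l p q d2 e) * (M : Matrix _ _ ℤ)
        = (M : Matrix _ _ ℤ) * Matrix.diagonal (Stmt12Aux.fdiag l p q d2 e) :=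
      congrArg Units.val h
    have h2 := congrFun (congrFun h' a) c
    rw [Matrix.diagonal_mul, Matrix.mul_diagonal] at h2
    have h3 : (Stmt12Aux.fdiag l p q d2 e a - Stmt12Aux.fdiag l p q d2 e c) *
        (M : Matrix (BIdx l p q) (BIdx l p q) ℤ) a c = 0 := by
      rw [sub_mul, h2]; ring
    rcases mul_eq_zero.mp h3 with h4 | h4
    · exact absurd (sub_eq_zero.mp h4) hne
    · exact h4
  have hrow : ∀ (i : Fin p) (b : BIdx l p q), b ≠ Sum.inr (Sum.inl i) →
      (M : Matrix (BIdx l p q) (BIdx l p q) ℤ) (Sum.inr (Sum.inl i)) b = 0 := by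
    intro i b hb
    rcases b with a | j | j
    · exact key (fun j => if j = i then -1 else 1) 1 _ _ (by simp [Stmt12Aux.fdiag])
    · have hji : j ≠ i := by rintro rfl; exact hb rfl
      exact key (fun k => if k = i then -1 else 1) 1 _ _ (by simp [Stmt12Aux.fdiag, hji])
    · exact key 1 (-1) _ _ (by simp [Stmt12Aux.fdiag])
  refine ⟨?_, ?_, ?_, ?_, ?_⟩
  · intro a i
    refine ⟨?_, hrow i _ (by simp)⟩
    exact key (fun j => if j = i then -1 else 1) 1 _ _ (by simp [Stmt12Aux.fdiag])
  · intro a i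
    exact ⟨key 1 (-1) _ _ (by simp [Stmt12Aux.fdiag]),
      key 1 (-1) _ _ (by simp [Stmt12Aux.fdiag])⟩
  · intro i j
    exact ⟨hrow i _ (by simp), key 1 (-1) _ _ (by simp [Stmt12Aux.fdiag])⟩
  · intro i j hij
    exact hrow i _ (by simp [hij.symm])
  · intro i
    have h1 := congrFun (congrFun M.mul_inv (Sum.inr (Sum.inl i))) (Sum.inr (Sum.inl i))
    rw [Matrix.mul_apply, Finset.sum_eq_single (Sum.inr (Sum.inl i))] at h1
    · have hu : IsUnit ((M : Matrix (BIdx l p q) (BIdx l p q) ℤ)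
          (Sum.inr (Sum.inl i)) (Sum.inr (Sum.inl i))) :=
        IsUnit.of_mul_eq_one _ (h1.trans (Matrix.one_apply_eq _))
      exact Int.isUnit_iff.mp hu
    · intro b _ hb
      rw [hrow i b hb, zero_mul]
    · intro h
      exact absurd (Finset.mem_univ _) h
end
end
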